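/- arXiv:1706.08414 — 9 statements merged into one kernel-verified Lean document; each statement's English description precedes it below -/
import Mathlib

section
/- Let H and G be finite simple graphs and let R be a finite simple graph with vertex set V(H). Let σ be an R-connected, H-loop-free partition of V(H). Then the number of homomorphisms from H/σ to G equals the sum, over all R-connected, H-loop-free partitions ρ of V(H) with σ ≤ ρ (i.e., σ refines ρ), of the cardinality of Hom(H/ρ, G)[R]. -/
/-- The quotient graph `H/ρ`: vertices are the blocks of the partition (equivalence
classes of the setoid `ρ`), and two distinct blocks are adjacent iff they contain
adjacent vertices of `H`. -/
def quotientGraph {V : Type} (H : SimpleGraph V) (ρ : Setoid V) :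
    SimpleGraph (Quotient ρ) where
  Adj B B' := B ≠ B' ∧ ∃ u v : V, Quotient.mk ρ u = B ∧ Quotient.mk ρ v = B' ∧ H.Adj u v
  symm := by
    constructor
    rintro B B' ⟨hne, u, v, hu, hv, h⟩
    exact ⟨hne.symm, v, u, hv, hu, h.symm⟩
  loopless := by
    constructor
    rintro B ⟨hne, -⟩
    exact hne rfl

/-- A partition (setoid) `ρ` of `V` is `R`-connected if every block induces a connected
subgraph of `R`. -/
def RConnectedPartition {V : Type} (R : SimpleGraph V) (ρ : Setoid V) : Prop :=
  ∀ v : V, (R.induce {u : V | ρ.r u v}).Connected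

/-- A partition (setoid) `ρ` is `H`-loop-free if no block contains two vertices that are
adjacent in `H`. -/
def LoopFreePartition {V : Type} (H : SimpleGraph V) (ρ : Setoid V) : Prop :=
  ∀ u v : V, ρ.r u v → ¬ H.Adj u v

/-- `Hom(H/ρ, G)[R]`: homomorphisms `φ` from `H/ρ` to `G` such that `φ(B) ≠ φ(B')`
whenever `B, B'` are distinct blocks containing vertices `u ∈ B`, `v ∈ B'` with `{u,v}`
an edge of `R`. -/
def RRestrictedHom {V W : Type} (H : SimpleGraph V) (G : SimpleGraph W) (R : SimpleGraph V)
    (ρ : Setoid V) : Type :=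
  {φ : quotientGraph H ρ →g G //
    ∀ u v : V, R.Adj u v → Quotient.mk ρ u ≠ Quotient.mk ρ v →
      φ (Quotient.mk ρ u) ≠ φ (Quotient.mk ρ v)}

section Aux

variable {V W : Type} (H : SimpleGraph V) (G : SimpleGraph W) (R : SimpleGraph V)
  (σ : Setoid V)

/-- The auxiliary graph on `V` whose edges are the `R`-edges on which `φ` takes equal values. -/
def auxK (φ : quotientGraph H σ →g G) : SimpleGraph V where
  Adj u v := R.Adj u v ∧ φ (Quotient.mk σ u) = φ (Quotient.mk σ v)
  symm := ⟨fun u v ⟨h1, h2⟩ => ⟨h1.symm, h2.symm⟩⟩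
  loopless := ⟨fun u ⟨h1, _⟩ => R.irrefl h1⟩

lemma auxK_val_eq_of_reachable (φ : quotientGraph H σ →g G) {u v : V}
    (h : (auxK H G R σ φ).Reachable u v) :
    φ (Quotient.mk σ u) = φ (Quotient.mk σ v) := by
  obtain ⟨p⟩ := h
  induction p with
  | nil => rfl
  | cons h p ih => exact h.2.trans ih

lemma reachable_of_connected (φ : quotientGraph H σ →g G) {s : Set V}
    (hconst : ∀ a ∈ s, ∀ b ∈ s, φ (Quotient.mk σ a) = φ (Quotient.mk σ b))
    (hconn : (R.induce s).Connected) {u v : V} (hu : u ∈ s) (hv : v ∈ s) :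
    (auxK H G R σ φ).Reachable u v := by
  let f : R.induce s →g auxK H G R σ φ :=
    ⟨Subtype.val, fun {a b} hab => ⟨hab, hconst a a.2 b b.2⟩⟩
  exact (hconn.preconnected ⟨u, hu⟩ ⟨v, hv⟩).map f

lemma auxK_supp_connected (φ : quotientGraph H σ →g G) (v : V) :
    (R.induce {u : V | (auxK H G R σ φ).Reachable u v}).Connected := by
  classical
  set K := auxK H G R σ φ
  have hK : (K.induce {u : V | K.Reachable u v}).Connected := by
    refine SimpleGraph.induce_connected_of_patches (s := {u : V | K.Reachable u v}) v (SimpleGraph.Reachable.refl v) ?_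
    intro w hw
    obtain ⟨p⟩ := (hw : K.Reachable w v).symm
    refine ⟨{x | x ∈ p.support}, ?_, p.start_mem_support, p.end_mem_support, ?_⟩
    · intro x hx
      exact ((p.takeUntil x hx).reachable).symm
    · exact (p.connected_induce_support).preconnected _ _
  let f : K.induce {u : V | K.Reachable u v} →g R.induce {u : V | K.Reachable u v} :=
    ⟨id, fun {a b} hab => hab.1⟩
  exact hK.map f (fun x => ⟨x, rfl⟩)

/-- Forward map: compose a restricted hom on a coarser quotient with the projection. -/
def coarsen {ρ : Setoid V} (hl : LoopFreePartition H ρ) (hle : σ ≤ ρ)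
    (ψ : RRestrictedHom H G R ρ) : quotientGraph H σ →g G where
  toFun := Quotient.lift (fun u => ψ.1 (Quotient.mk ρ u))
    (fun a b h => congrArg ψ.1 (Quotient.sound (hle h)))
  map_rel' := by
    rintro B B' ⟨hne, u, w, hu, hw, hadj⟩
    subst hu; subst hw
    apply ψ.1.map_rel'
    refine ⟨?_, u, w, rfl, rfl, hadj⟩
    intro h
    exact hl u w (Quotient.exact h) hadj

lemma coarsen_rel_iff {ρ : Setoid V} (hc : RConnectedPartition R ρ)
    (hl : LoopFreePartition H ρ) (hle : σ ≤ ρ) (ψ : RRestrictedHom H G R ρ) (u v : V) :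
    ρ.r u v ↔ (auxK H G R σ (coarsen H G R σ hl hle ψ)).Reachable u v := by
  set φ := coarsen H G R σ hl hle ψ with hφ
  constructor
  · intro h
    refine reachable_of_connected H G R σ φ (s := {w | ρ.r w v}) ?_ (hc v) h (ρ.iseqv.refl v)
    intro a ha b hb
    show ψ.1 (Quotient.mk ρ a) = ψ.1 (Quotient.mk ρ b)
    exact congrArg ψ.1 (Quotient.sound (ρ.iseqv.trans ha (ρ.iseqv.symm hb)))
  · intro h
    obtain ⟨p⟩ := h
    induction p with
    | nil => exact ρ.iseqv.refl _
    | @cons a b c hab p ih =>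
      refine ρ.iseqv.trans ?_ ih
      by_contra hne
      have hne' : Quotient.mk ρ a ≠ Quotient.mk ρ b := fun he => hne (Quotient.exact he)
      exact ψ.2 a b hab.1 hne' hab.2

end Aux

/-- The zeta-transform identity: for an `R`-connected, `H`-loop-free partition `σ`,
the number of homomorphisms from `H/σ` to `G` equals the sum, over all `R`-connected,
`H`-loop-free partitions `ρ` refined by `σ`, of `#Hom(H/ρ, G)[R]`. -/
theorem card_hom_quotient_eq_sum_restricted {V W : Type} [Fintype V] [Fintype W]
    (H : SimpleGraph V) (G : SimpleGraph W) (R : SimpleGraph V)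
    (σ : Setoid V) (hσc : RConnectedPartition R σ) (hσl : LoopFreePartition H σ) :
    Nat.card (quotientGraph H σ →g G) =
      ∑ᶠ ρ ∈ {ρ : Setoid V |
          RConnectedPartition R ρ ∧ LoopFreePartition H ρ ∧ σ ≤ ρ},
        Nat.card (RRestrictedHom H G R ρ) := by
  classical
  set S : Set (Setoid V) :=
    {ρ : Setoid V | RConnectedPartition R ρ ∧ LoopFreePartition H ρ ∧ σ ≤ ρ} with hS
  -- the global bijection
  let F : (Σ ρ : S, RRestrictedHom H G R ρ.1) → (quotientGraph H σ →g G) :=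
    fun x => coarsen H G R σ x.1.2.2.1 x.1.2.2.2 x.2
  have hFinj : Function.Injective F := by
    rintro ⟨⟨ρ1, hc1, hl1, hle1⟩, ψ1⟩ ⟨⟨ρ2, hc2, hl2, hle2⟩, ψ2⟩ h
    have hρ : ρ1 = ρ2 := by
      apply Setoid.ext
      intro u v
      rw [show ρ1.r u v ↔ _ from coarsen_rel_iff H G R σ hc1 hl1 hle1 ψ1 u v,
        show ρ2.r u v ↔ _ from coarsen_rel_iff H G R σ hc2 hl2 hle2 ψ2 u v]
      simp only [F] at h
      rw [h]
    subst hρ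
    have hψ : ψ1 = ψ2 := by
      apply Subtype.ext
      apply DFunLike.ext  -- maybe DFunLike.ext
      intro B
      induction B using Quotient.ind with
      | _ u =>
        have := congrFun (congrArg (fun (f : quotientGraph H σ →g G) => f.toFun) h)
          (Quotient.mk σ u)
        exact this
    rw [hψ]
  have hFsurj : Function.Surjective F := by
    intro φ
    set K := auxK H G R σ φ with hK
    let ρ : Setoid V := K.reachableSetoid
    have hrρ : ∀ u v, ρ.r u v ↔ K.Reachable u v := fun u v => Iff.rfl
    have hc : RConnectedPartition R ρ := fun v => auxK_supp_connected H G R σ φ v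
    have hl : LoopFreePartition H ρ := by
      intro u v huv hadj
      have hne : Quotient.mk σ u ≠ Quotient.mk σ v := fun he => hσl u v (Quotient.exact he) hadj
      have hadjq : (quotientGraph H σ).Adj (Quotient.mk σ u) (Quotient.mk σ v) :=
        ⟨hne, u, v, rfl, rfl, hadj⟩
      have hGadj : G.Adj (φ (Quotient.mk σ u)) (φ (Quotient.mk σ v)) := φ.map_adj hadjq
      have heq : φ (Quotient.mk σ u) = φ (Quotient.mk σ v) :=
        auxK_val_eq_of_reachable H G R σ φ huv
      rw [heq] at hGadj
      exact G.loopless.irrefl _ hGadj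
    have hle : σ ≤ ρ := by
      intro u v h
      refine reachable_of_connected H G R σ φ (s := {w | σ.r w v}) ?_ (hσc v) h (σ.iseqv.refl v)
      intro a ha b hb
      exact congrArg φ (Quotient.sound (σ.iseqv.trans ha (σ.iseqv.symm hb)))
    -- the induced hom on the coarser quotient
    let ψ0 : quotientGraph H ρ →g G :=
      { toFun := Quotient.lift (fun u => φ (Quotient.mk σ u))
          (fun a b h => auxK_val_eq_of_reachable H G R σ φ h)
        map_rel' := by
          rintro B B' ⟨hne, u, w, hu, hw, hadj⟩
          subst hu; subst hw
          apply φ.map_rel'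
          refine ⟨fun he => hσl u w (Quotient.exact he) hadj, u, w, rfl, rfl, hadj⟩ }
    have hψr : ∀ u v : V, R.Adj u v → Quotient.mk ρ u ≠ Quotient.mk ρ v →
        ψ0 (Quotient.mk ρ u) ≠ ψ0 (Quotient.mk ρ v) := by
      intro u v hR hne heq
      exact hne (Quotient.sound ((hrρ u v).mpr (SimpleGraph.Adj.reachable ⟨hR, heq⟩)))
    refine ⟨⟨⟨ρ, hc, hl, hle⟩, ⟨ψ0, hψr⟩⟩, ?_⟩
    apply DFunLike.ext _ _
    intro B
    induction B using Quotient.ind with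
    | _ u => rfl
  have e : (Σ ρ : S, RRestrictedHom H G R ρ.1) ≃ (quotientGraph H σ →g G) :=
    Equiv.ofBijective F ⟨hFinj, hFsurj⟩
  rw [← Nat.card_congr e]
  -- finiteness
  have hfinS : Finite (Setoid V) := by
    exact Finite.of_injective (fun ρ : Setoid V => ρ.r)
      fun a b h => Setoid.ext fun x y => iff_of_eq (congrFun (congrFun h x) y)
  have : Fintype S := Fintype.ofFinite _
  have hfr : ∀ ρ : Setoid V, Finite (RRestrictedHom H G R ρ) := by
    intro ρ
    have : Finite (Quotient ρ) := Quotient.finite _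
    have : Finite (quotientGraph H ρ →g G) :=
      Finite.of_injective (fun f => (f : Quotient ρ → W)) (fun a b h => DFunLike.ext a b (congrFun h))
    exact Subtype.finite
  have : ∀ ρ : S, Fintype (RRestrictedHom H G R ρ.1) := fun ρ => @Fintype.ofFinite _ (hfr ρ.1)
  rw [← finsum_set_coe_eq_finsum_mem, finsum_eq_sum_of_fintype]
  rw [Nat.card_eq_fintype_card, Fintype.card_sigma]
  congr 1
  ext ρ
  rw [Nat.card_eq_fintype_card]
end

section
/- Let H and G be finite simple graphs and let R be a finite simple graph with vertex set V(H). Let L be the lattice of R-connected partitions of V(H) ordered by refinement, with minimum element ⊥ (the partition into singletons) and Möbius function μ. Then the number of homomorphisms φ from H to G satisfying φ(u) ≠ φ(v) for every edge {u,v} of R equals the sum, over all H-loop-free partitions ρ ∈ L, of μ(⊥, ρ) times the number of homomorphisms from H/ρ to G. -/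
open scoped Classical

section Aux

open Relation

variable {V W : Type} (H : SimpleGraph V) (G : SimpleGraph W) (R : SimpleGraph V)

/-- The finest `R`-connected partition refined by the kernel of `φ`:
generated by the relation "adjacent in `R` and mapped to the same vertex by `φ`". -/
noncomputable def kappa (φ : H →g G) : Setoid V :=
  EqvGen.setoid (fun u v => R.Adj u v ∧ φ u = φ v)

variable {H G R}

lemma kappa_r {φ : H →g G} {u v : V} :
    (kappa H G R φ).r u v ↔ EqvGen (fun u v => R.Adj u v ∧ φ u = φ v) u v := Iff.rfl

lemma kappa_le_ker (φ : H →g G) : kappa H G R φ ≤ Setoid.ker ⇑φ :=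
  Setoid.eqvGen_le (fun _ _ h => h.2)

lemma kappa_rconnected (φ : H →g G) : RConnectedPartition R (kappa H G R φ) := by
  intro v
  set s : V → V → Prop := fun u v => R.Adj u v ∧ φ u = φ v with hs
  have key : ∀ u w : V, EqvGen s u w →
      ∀ (hu : EqvGen s u v) (hw : EqvGen s w v),
        (R.induce {x : V | (kappa H G R φ).r x v}).Reachable ⟨u, hu⟩ ⟨w, hw⟩ := by
    intro u w h
    induction h with
    | rel a b hab =>
      intro ha hb
      exact SimpleGraph.Adj.reachable (by simpa using hab.1)
    | refl a =>
      intro ha hb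
      exact SimpleGraph.Reachable.refl _
    | symm a b hab ih =>
      intro ha hb
      exact (ih hb ha).symm
    | trans a b c hab hbc ih1 ih2 =>
      intro ha hc
      have hb : EqvGen s b v := (EqvGen.symm _ _ hab).trans _ _ _ ha
      exact (ih1 ha hb).trans (ih2 hb hc)
  rw [SimpleGraph.connected_iff]
  refine ⟨?_, ⟨⟨v, EqvGen.refl v⟩⟩⟩
  rintro ⟨u, hu⟩ ⟨w, hw⟩
  exact key u w ((hu : EqvGen s u v).trans _ _ _ ((hw : EqvGen s w v).symm _ _)) hu hw

lemma le_kappa_iff {φ : H →g G} {σ : Setoid V} (hσ : RConnectedPartition R σ) :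
    σ ≤ Setoid.ker ⇑φ ↔ σ ≤ kappa H G R φ := by
  constructor
  · intro hle u v huv
    -- walk in the induced graph on the block of `v`
    have hblock : ∀ (a b : {x : V | σ.r x v}) (p : (R.induce {x : V | σ.r x v}).Walk a b),
        (kappa H G R φ).r a.1 b.1 := by
      intro a b p
      induction p with
      | nil => exact (kappa H G R φ).refl' _
      | @cons a c b h p ih =>
        rw [kappa_r] at ih ⊢
        refine (EqvGen.rel a.1 c.1 ⟨by simpa using h, ?_⟩).trans _ _ _ ih
        have h1 : φ a.1 = φ v := hle a.2
        have h2 : φ c.1 = φ v := hle c.2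
        exact h1.trans h2.symm
    obtain ⟨p⟩ := (hσ v).preconnected ⟨u, huv⟩ ⟨v, σ.refl' v⟩
    exact hblock _ _ p
  · intro h
    exact h.trans (kappa_le_ker φ)

lemma loopFree_of_le_ker {φ : H →g G} {σ : Setoid V} (hle : σ ≤ Setoid.ker ⇑φ) :
    LoopFreePartition H σ := by
  intro u v huv hadj
  have h1 : φ u = φ v := hle huv
  have h2 := φ.map_rel hadj
  rw [h1] at h2
  exact G.loopless.irrefl (φ v) h2

lemma kappa_eq_bot_iff {φ : H →g G} :
    kappa H G R φ = ⊥ ↔ ∀ u v : V, R.Adj u v → φ u ≠ φ v := by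
  constructor
  · intro h u v hadj heq
    have h2 : (kappa H G R φ).r u v := EqvGen.rel _ _ ⟨hadj, heq⟩
    rw [h] at h2
    exact R.loopless.irrefl u (h2 ▸ hadj)
  · intro h
    refine le_antisymm ?_ bot_le
    refine Setoid.eqvGen_le (fun x y hxy => ?_)
    exact absurd hxy.2 (h x y hxy.1)

/-- For a loop-free partition, homs out of the quotient correspond to homs that are
constant on blocks. -/
noncomputable def quotientHomEquiv {ρ : Setoid V} (hρ : LoopFreePartition H ρ) :
    (quotientGraph H ρ →g G) ≃ {φ : H →g G // ρ ≤ Setoid.ker ⇑φ} where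
  toFun ψ := ⟨⟨fun v => ψ (Quotient.mk ρ v), by
      intro u v huv
      refine ψ.map_rel ⟨fun hc => hρ u v (Quotient.exact hc) huv, u, v, rfl, rfl, huv⟩⟩,
    fun {u v} huv => congrArg ψ (Quotient.sound huv)⟩
  invFun φ := ⟨Quotient.lift ⇑φ.1 (fun a b hab => φ.2 hab), by
      rintro B B' ⟨hne, u, v, rfl, rfl, huv⟩
      exact φ.1.map_rel huv⟩
  left_inv ψ := by
    ext B
    induction B using Quotient.ind
    rfl
  right_inv φ := rfl

end Aux

/-- **Möbius inversion over the lattice of `R`-connected partitions.**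
Let `L` be the lattice of `R`-connected partitions of `V(H)` ordered by refinement, with
minimum element `⊥` (the partition into singletons, i.e. the bottom setoid) and Möbius
function `μ = μ(⊥, ·)`, characterized by the defining recurrence
`∑_{σ ∈ L, σ ≤ ρ} μ(σ) = [ρ = ⊥]` for all `ρ ∈ L`.  Then the number of homomorphisms
`φ : H → G` satisfying `φ(u) ≠ φ(v)` for every edge `{u,v}` of `R` equals the sum, over
all `H`-loop-free partitions `ρ ∈ L`, of `μ(⊥, ρ) · #Hom(H/ρ, G)`. -/
theorem card_restricted_hom_eq_moebius_sum {V W : Type} [Fintype V] [Fintype W]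
    (H : SimpleGraph V) (G : SimpleGraph W) (R : SimpleGraph V)
    (μ : Setoid V → ℤ)
    (hμ : ∀ ρ : Setoid V, RConnectedPartition R ρ →
      (∑ᶠ σ ∈ {σ : Setoid V | RConnectedPartition R σ ∧ σ ≤ ρ}, μ σ)
        = if ρ = ⊥ then 1 else 0) :
    (Nat.card {φ : H →g G // ∀ u v : V, R.Adj u v → φ u ≠ φ v} : ℤ) =
      ∑ᶠ ρ ∈ {ρ : Setoid V | RConnectedPartition R ρ ∧ LoopFreePartition H ρ},
        μ ρ * Nat.card (quotientGraph H ρ →g G) := by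
  haveI : Finite (Setoid V) :=
    Finite.of_injective (fun s : Setoid V => s.r)
      (fun a b h => Setoid.ext (fun x y => by rw [show a.r = b.r from h]))
  haveI : Fintype (Setoid V) := Fintype.ofFinite _
  haveI : Finite (H →g G) :=
    Finite.of_injective (fun f : H →g G => (f : V → W)) DFunLike.coe_injective
  haveI : Fintype (H →g G) := Fintype.ofFinite _
  -- convert the finsum on the RHS into a Finset sum
  have hset : {ρ : Setoid V | RConnectedPartition R ρ ∧ LoopFreePartition H ρ}
      = ↑(Finset.univ.filter
          (fun ρ : Setoid V => RConnectedPartition R ρ ∧ LoopFreePartition H ρ)) := by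
    ext ρ; simp
  rw [hset, finsum_mem_coe_finset]
  -- replace each quotient-hom count by the count of homs constant on blocks
  have step1 : ∀ ρ ∈ Finset.univ.filter
      (fun ρ : Setoid V => RConnectedPartition R ρ ∧ LoopFreePartition H ρ),
      μ ρ * (Nat.card (quotientGraph H ρ →g G) : ℤ)
        = μ ρ * (Nat.card {φ : H →g G // ρ ≤ Setoid.ker ⇑φ} : ℤ) := by
    intro ρ hρ
    rw [Finset.mem_filter] at hρ
    rw [Nat.card_congr (quotientHomEquiv hρ.2.2)]
  rw [Finset.sum_congr rfl step1]
  -- extend the sum to all R-connected partitions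
  have step2 : ∑ ρ ∈ Finset.univ.filter
        (fun ρ : Setoid V => RConnectedPartition R ρ ∧ LoopFreePartition H ρ),
        μ ρ * (Nat.card {φ : H →g G // ρ ≤ Setoid.ker ⇑φ} : ℤ)
      = ∑ ρ ∈ Finset.univ.filter (fun ρ : Setoid V => RConnectedPartition R ρ),
        μ ρ * (Nat.card {φ : H →g G // ρ ≤ Setoid.ker ⇑φ} : ℤ) := by
    refine Finset.sum_subset ?_ ?_
    · intro ρ hρ
      rw [Finset.mem_filter] at hρ ⊢
      exact ⟨hρ.1, hρ.2.1⟩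
    · intro ρ hρ1 hρ2
      rw [Finset.mem_filter] at hρ1 hρ2
      have hnLF : ¬ LoopFreePartition H ρ := fun h => hρ2 ⟨hρ1.1, hρ1.2, h⟩
      have : IsEmpty {φ : H →g G // ρ ≤ Setoid.ker ⇑φ} :=
        ⟨fun φ => hnLF (loopFree_of_le_ker φ.2)⟩
      rw [Nat.card_of_isEmpty]
      simp
  rw [step2]
  have cardsum : ∀ ρ : Setoid V, (Nat.card {φ : H →g G // ρ ≤ Setoid.ker ⇑φ} : ℤ)
      = ∑ φ : H →g G, if ρ ≤ Setoid.ker ⇑φ then (1 : ℤ) else 0 := by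
    intro ρ
    rw [Nat.card_eq_fintype_card, Fintype.card_subtype, Finset.card_filter]
    push_cast
    rfl
  refine Eq.symm ?_
  calc
    ∑ ρ ∈ Finset.univ.filter (fun ρ : Setoid V => RConnectedPartition R ρ),
        μ ρ * (Nat.card {φ : H →g G // ρ ≤ Setoid.ker ⇑φ} : ℤ)
      = ∑ ρ ∈ Finset.univ.filter (fun ρ : Setoid V => RConnectedPartition R ρ),
          ∑ φ : H →g G, (if ρ ≤ Setoid.ker ⇑φ then μ ρ else 0) := by
        refine Finset.sum_congr rfl (fun ρ _ => ?_)
        rw [cardsum ρ, Finset.mul_sum]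
        exact Finset.sum_congr rfl (fun φ _ => by split <;> simp)
    _ = ∑ φ : H →g G, ∑ ρ ∈ Finset.univ.filter
          (fun ρ : Setoid V => RConnectedPartition R ρ),
          (if ρ ≤ Setoid.ker ⇑φ then μ ρ else 0) := Finset.sum_comm
    _ = ∑ φ : H →g G, (if (∀ u v : V, R.Adj u v → φ u ≠ φ v) then (1 : ℤ) else 0) := by
        refine Finset.sum_congr rfl (fun φ _ => ?_)
        have hμφ := hμ (kappa H G R φ) (kappa_rconnected φ)
        have hset2 : {σ : Setoid V | RConnectedPartition R σ ∧ σ ≤ kappa H G R φ}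
            = ↑(Finset.univ.filter
              (fun σ : Setoid V => RConnectedPartition R σ ∧ σ ≤ kappa H G R φ)) := by
          ext σ; simp
        rw [hset2, finsum_mem_coe_finset] at hμφ
        have hswap : ∑ ρ ∈ Finset.univ.filter
              (fun ρ : Setoid V => RConnectedPartition R ρ),
              (if ρ ≤ Setoid.ker ⇑φ then μ ρ else 0)
            = ∑ σ ∈ Finset.univ.filter
              (fun σ : Setoid V => RConnectedPartition R σ ∧ σ ≤ kappa H G R φ), μ σ := by
          rw [Finset.sum_filter, Finset.sum_filter]
          refine Finset.sum_congr rfl (fun ρ _ => ?_)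
          by_cases hc : RConnectedPartition R ρ
          · rw [if_pos hc]
            by_cases hd : ρ ≤ Setoid.ker ⇑φ
            · rw [if_pos hd, if_pos ⟨hc, (le_kappa_iff hc).mp hd⟩]
            · rw [if_neg hd,
                if_neg (fun hcd : _ ∧ _ => hd ((le_kappa_iff hc).mpr hcd.2))]
          · rw [if_neg hc, if_neg (fun hcd : _ ∧ _ => hc hcd.1)]
        rw [hswap, hμφ]
        exact if_congr kappa_eq_bot_iff rfl rfl
    _ = (Nat.card {φ : H →g G // ∀ u v : V, R.Adj u v → φ u ≠ φ v} : ℤ) := by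
        rw [Nat.card_eq_fintype_card, Fintype.card_subtype, Finset.card_filter]
        push_cast
        rfl
end

section
/- Let H and G be finite simple graphs. Then the number of injective homomorphisms from H to G equals the sum, over all H-loop-free partitions ρ of V(H), of μ(⊥, ρ) times the number of homomorphisms from H/ρ to G, where μ is the Möbius function of the lattice of all partitions of V(H) ordered by refinement and ⊥ is the partition into singletons. -/
open scoped Classical

instance setoidFinite {V : Type} [Finite V] : Finite (Setoid V) :=
  Finite.of_injective (fun ρ : Setoid V => (fun x y => ρ.r x y : V → V → Prop))
    (fun _ _ h => Setoid.ext fun x y => iff_of_eq (congrFun (congrFun h x) y))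

lemma homFinite {V W : Type} [Finite V] [Finite W] (H : SimpleGraph V) (G : SimpleGraph W) :
    Finite (H →g G) :=
  Finite.of_injective (fun φ : H →g G => (φ : V → W)) (fun a b h => by
    cases a; cases b; simpa using h)

/-- Homs from the quotient correspond to homs constant on the blocks of `ρ`. -/
noncomputable def quotHomEquiv {V W : Type} (H : SimpleGraph V) (G : SimpleGraph W)
    (ρ : Setoid V) (hρ : LoopFreePartition H ρ) :
    (quotientGraph H ρ →g G) ≃ {φ : H →g G // ρ ≤ Setoid.ker (φ : V → W)} where
  toFun ψ := ⟨⟨fun v => ψ (Quotient.mk ρ v), by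
      intro u v h
      apply ψ.map_rel
      refine ⟨fun he => hρ u v (Quotient.exact he) h, u, v, rfl, rfl, h⟩⟩,
    by intro u v h; exact congrArg ψ (Quotient.sound h)⟩
  invFun φ := ⟨fun B => Quotient.lift (φ.1 : V → W) (fun a b h => φ.2 h) B, by
      rintro B B' ⟨hne, u, v, hu, hv, hadj⟩
      subst hu; subst hv
      exact φ.1.map_rel hadj⟩
  left_inv ψ := by
    ext B
    induction B using Quotient.ind
    rfl
  right_inv φ := by
    ext v
    rfl

lemma ker_loopfree {V W : Type} (H : SimpleGraph V) (G : SimpleGraph W) (φ : H →g G) :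
    LoopFreePartition H (Setoid.ker (φ : V → W)) := by
  intro u v h hadj
  exact G.loopless.irrefl _ (Setoid.ker_def.mp h ▸ φ.map_rel hadj)

/-- **Lovász's identity via Möbius inversion over the partition lattice.**
The number of injective homomorphisms from `H` to `G` equals the sum, over all
`H`-loop-free partitions `ρ` of `V(H)`, of `μ(⊥, ρ) · #Hom(H/ρ, G)`, where `μ = μ(⊥, ·)`
is the Möbius function of the lattice of all partitions of `V(H)` ordered by refinement
(characterized by `∑_{σ ≤ ρ} μ(σ) = [ρ = ⊥]`) and `⊥` is the partition into
singletons. -/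
theorem card_embedding_eq_moebius_sum {V W : Type} [Fintype V] [Fintype W]
    (H : SimpleGraph V) (G : SimpleGraph W)
    (μ : Setoid V → ℤ)
    (hμ : ∀ ρ : Setoid V,
      (∑ᶠ σ ∈ {σ : Setoid V | σ ≤ ρ}, μ σ) = if ρ = ⊥ then 1 else 0) :
    (Nat.card {φ : H →g G // Function.Injective φ} : ℤ) =
      ∑ᶠ ρ ∈ {ρ : Setoid V | LoopFreePartition H ρ},
        μ ρ * Nat.card (quotientGraph H ρ →g G) := by
  classical
  haveI : Finite (H →g G) := homFinite H G
  haveI : Fintype (H →g G) := Fintype.ofFinite _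
  haveI : Fintype (Setoid V) := Fintype.ofFinite _
  have hμ' : ∀ ρ : Setoid V,
      (∑ σ ∈ ({σ : Setoid V | σ ≤ ρ} : Set (Setoid V)).toFinset, μ σ)
        = if ρ = ⊥ then 1 else 0 := by
    intro ρ
    rw [← finsum_mem_eq_toFinset_sum]
    exact hμ ρ
  rw [finsum_mem_eq_toFinset_sum]
  symm
  set S := ({ρ : Setoid V | LoopFreePartition H ρ} : Set (Setoid V)).toFinset with hS
  calc ∑ ρ ∈ S, μ ρ * (Nat.card (quotientGraph H ρ →g G) : ℤ)
      = ∑ ρ ∈ S, ∑ φ : H →g G,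
          μ ρ * (if ρ ≤ Setoid.ker (φ : V → W) then (1 : ℤ) else 0) := by
        apply Finset.sum_congr rfl
        intro ρ hρ
        rw [hS, Set.mem_toFinset] at hρ
        rw [← Finset.mul_sum]
        congr 1
        rw [Nat.card_congr (quotHomEquiv H G ρ hρ), Nat.card_eq_fintype_card,
          Fintype.card_subtype, Finset.card_filter]
        push_cast
        rfl
    _ = ∑ φ : H →g G, ∑ ρ ∈ S,
          μ ρ * (if ρ ≤ Setoid.ker (φ : V → W) then (1 : ℤ) else 0) := Finset.sum_comm
    _ = ∑ φ : H →g G, (if Function.Injective (φ : V → W) then (1 : ℤ) else 0) := by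
        apply Finset.sum_congr rfl
        intro φ _
        have hset : S.filter (fun ρ => ρ ≤ Setoid.ker (φ : V → W))
            = ({σ : Setoid V | σ ≤ Setoid.ker (φ : V → W)} : Set (Setoid V)).toFinset := by
          ext ρ
          simp only [Finset.mem_filter, Set.mem_toFinset, Set.mem_setOf_eq, hS]
          constructor
          · exact fun h => h.2
          · intro h
            refine ⟨fun u v hr hadj => ker_loopfree H G φ u v (h hr) hadj, h⟩
        have hmul : ∀ ρ : Setoid V, μ ρ * (if ρ ≤ Setoid.ker (φ : V → W) then (1 : ℤ) else 0)
            = if ρ ≤ Setoid.ker (φ : V → W) then μ ρ else 0 := by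
          intro ρ; split <;> simp
        simp_rw [hmul]
        rw [← Finset.sum_filter, hset, hμ' (Setoid.ker (φ : V → W))]
        by_cases hinj : Function.Injective (φ : V → W)
        · rw [if_pos hinj, if_pos ((Setoid.injective_iff_ker_bot (φ : V → W)).mp hinj)]
        · rw [if_neg hinj,
            if_neg (fun h => hinj ((Setoid.injective_iff_ker_bot (φ : V → W)).mpr h))]
    _ = (Nat.card {φ : H →g G // Function.Injective (φ : V → W)} : ℤ) := by
        rw [Nat.card_eq_fintype_card, Fintype.card_subtype, Finset.card_filter]
        push_cast
        rfl
end

section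
/- Let T be a finite tree and let ρ be a partition of V(T) such that (i) every block of ρ induces a connected subgraph of τLi(T), and (ii) no block of ρ contains two vertices that are adjacent in T. Then the quotient graph T/ρ is a tree. (In other words, every τLi-minor of a tree is again a tree.) -/
/-- `τLi(H)`: the graph on `V(H)` in which two distinct vertices are adjacent iff they
have a common neighbor in `H`. -/
def tauLi {V : Type} (H : SimpleGraph V) : SimpleGraph V where
  Adj u w := u ≠ w ∧ ∃ v : V, H.Adj u v ∧ H.Adj w v
  symm := by
    constructor
    rintro u w ⟨hne, v, h1, h2⟩
    exact ⟨hne.symm, v, h2, h1⟩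
  loopless := by
    constructor
    rintro u ⟨hne, -⟩
    exact hne rfl

namespace QuotTreeAux

open SimpleGraph Function

variable {V : Type} {T : SimpleGraph V}

lemma path_concat {u v w : V} {p : T.Walk u v} (hp : p.IsPath) (h : T.Adj v w)
    (hw : w ∉ p.support) : (p.concat h).IsPath := by
  rw [← Walk.isPath_reverse_iff, Walk.reverse_concat]
  exact hp.reverse.cons (by simpa [Walk.support_reverse] using hw)

lemma dist_le_of_mem_support {u v w : V} (p : T.Walk u v) (h : w ∈ p.support) :
    T.dist u w ≤ p.length := by
  classical
  exact (SimpleGraph.dist_le (p.takeUntil w h)).trans (Walk.length_takeUntil_le p h)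

/-- In a tree, adjacent vertices are at distances differing by exactly one from any root. -/
lemma tree_adj_dist_aux (hT : T.IsTree) (r : V) {u v : V} (h : T.Adj u v)
    (hle : T.dist r u ≤ T.dist r v) : T.dist r v = T.dist r u + 1 := by
  classical
  obtain ⟨p, hp, hplen⟩ := hT.isConnected.exists_path_of_dist r u
  have h1 : T.dist r v ≤ T.dist r u + 1 := by
    simpa [hplen] using SimpleGraph.dist_le (p.concat h)
  rcases Nat.lt_or_ge (T.dist r u) (T.dist r v) with hlt | hge
  · omega
  · exfalso
    have heq : T.dist r v = T.dist r u := le_antisymm hge hle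
    by_cases hv : v ∈ p.support
    · have h2 : T.dist r v ≤ (p.takeUntil v hv).length := SimpleGraph.dist_le _
      have h3 : T.dist v u ≤ (p.dropUntil v hv).length := SimpleGraph.dist_le _
      have h4 : (p.takeUntil v hv).length + (p.dropUntil v hv).length = p.length := by
        conv_rhs => rw [← Walk.take_spec p hv]
        rw [Walk.length_append]
      have h5 : 1 ≤ T.dist v u := hT.isConnected.pos_dist_of_ne h.ne.symm
      omega
    · have hq : (p.concat h).IsPath := path_concat hp h hv
      obtain ⟨q, hq', hqlen⟩ := hT.isConnected.exists_path_of_dist r v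
      have := (hT.existsUnique_path r v).unique hq hq'
      have : (p.concat h).length = q.length := by rw [this]
      rw [Walk.length_concat] at this
      omega

lemma tree_adj_dist (hT : T.IsTree) (r : V) {u v : V} (h : T.Adj u v) :
    T.dist r v = T.dist r u + 1 ∨ T.dist r u = T.dist r v + 1 := by
  rcases Nat.le_total (T.dist r u) (T.dist r v) with hle | hle
  · exact Or.inl (tree_adj_dist_aux hT r h hle)
  · exact Or.inr (tree_adj_dist_aux hT r h.symm hle)

/-- In a tree, the neighbour closer to the root is unique. -/
lemma tree_parent_unique (hT : T.IsTree) (r : V) {x y v : V}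
    (hx : T.Adj x v) (hdx : T.dist r x + 1 = T.dist r v)
    (hy : T.Adj y v) (hdy : T.dist r y + 1 = T.dist r v) : x = y := by
  obtain ⟨p, hp, hplen⟩ := hT.isConnected.exists_path_of_dist r x
  obtain ⟨q, hq, hqlen⟩ := hT.isConnected.exists_path_of_dist r y
  have hvp : v ∉ p.support := fun hv => by
    have := dist_le_of_mem_support p hv; omega
  have hvq : v ∉ q.support := fun hv => by
    have := dist_le_of_mem_support q hv; omega
  have h1 : (p.concat hx).IsPath := path_concat hp hx hvp
  have h2 : (q.concat hy).IsPath := path_concat hq hy hvq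
  have heq : p.concat hx = q.concat hy := (hT.existsUnique_path r v).unique h1 h2
  have := congrArg (fun w => w.reverse.support) heq
  simp only [Walk.reverse_concat, Walk.support_cons] at this
  rw [p.reverse.support_eq_cons, q.reverse.support_eq_cons] at this
  simp only [List.cons.injEq] at this
  exact this.2.1

open Classical in
/-- The parent of a vertex w.r.t. a root. -/
noncomputable def pa (T : SimpleGraph V) (r v : V) : V :=
  if h : ∃ x, T.Adj x v ∧ T.dist r x + 1 = T.dist r v then h.choose else v

open Classical in
lemma eq_pa (hT : T.IsTree) (r : V) {x v : V} (hx : T.Adj x v)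
    (hdx : T.dist r x + 1 = T.dist r v) : pa T r v = x := by
  have h : ∃ x, T.Adj x v ∧ T.dist r x + 1 = T.dist r v := ⟨x, hx, hdx⟩
  rw [pa, dif_pos h]
  exact tree_parent_unique hT r h.choose_spec.1 h.choose_spec.2 hx hdx

/-- Structure of a `tauLi` edge relative to a root in a tree. -/
lemma tauLi_step (hT : T.IsTree) (r : V) {x y : V} (h : (tauLi T).Adj x y) :
    (T.dist r x = T.dist r y ∧ pa T r x = pa T r y)
    ∨ (T.dist r y = T.dist r x + 2 ∧ x = pa T r (pa T r y))
    ∨ (T.dist r x = T.dist r y + 2 ∧ y = pa T r (pa T r x)) := by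
  obtain ⟨hne, z, hxz, hyz⟩ := h
  rcases tree_adj_dist hT r hxz with h1 | h1 <;> rcases tree_adj_dist hT r hyz with h2 | h2
  · exact absurd ((eq_pa hT r hxz (by omega)).symm.trans (eq_pa hT r hyz (by omega))) hne
  · refine Or.inr (Or.inl ⟨by omega, ?_⟩)
    rw [eq_pa hT r hyz.symm (by omega), eq_pa hT r hxz (by omega)]
  · refine Or.inr (Or.inr ⟨by omega, ?_⟩)
    rw [eq_pa hT r hxz.symm (by omega), eq_pa hT r hyz (by omega)]
  · exact Or.inl ⟨by omega, by rw [eq_pa hT r hxz.symm (by omega), eq_pa hT r hyz.symm (by omega)]⟩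

/-- Propagate a property along walks of the induced `tauLi` graph on a set. -/
lemma induce_walk_prop {s : Set V} (P : V → Prop)
    (hstep : ∀ a b : V, a ∈ s → b ∈ s → (tauLi T).Adj a b → P a → P b)
    {a b : s} (w : ((tauLi T).induce s).Walk a b) : P a → P b := by
  induction w with
  | nil => exact id
  | cons h p ih =>
    rename_i x y z
    exact fun hx => ih (hstep x y x.2 y.2 (by simpa using h) hx)

lemma block_walk_prop {ρ : Setoid V}
    (hconn : ∀ v : V, ((tauLi T).induce {u : V | ρ.r u v}).Connected)
    (v : V) (P : V → Prop)
    (hstep : ∀ a b : V, ρ.r a v → ρ.r b v → (tauLi T).Adj a b → P a → P b)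
    {a b : V} (ha : ρ.r a v) (hb : ρ.r b v) (hPa : P a) : P b := by
  obtain ⟨w⟩ := (hconn v).preconnected ⟨a, ha⟩ ⟨b, hb⟩
  exact induce_walk_prop P hstep w hPa

section Blocks

variable (hT : T.IsTree) (r : V) {ρ : Setoid V}
  (hconn : ∀ v : V, ((tauLi T).induce {u : V | ρ.r u v}).Connected)

include hT hconn

/-- All vertices of a block have the same distance parity from the root. -/
lemma block_parity {a b : V} (hab : ρ.r a b) :
    T.dist r a % 2 = T.dist r b % 2 := by
  refine block_walk_prop hconn b (fun x => T.dist r x % 2 = T.dist r a % 2)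
    (fun x y _ _ hxy hx => ?_) hab (ρ.refl b) rfl |>.symm
  rcases tauLi_step hT r hxy with ⟨h1, -⟩ | ⟨h1, -⟩ | ⟨h1, -⟩ <;> omega

/-- Ancestors one level above the minimum depth agree across a block. -/
lemma anc_const {v x₀ : V} (hx₀ : ρ.r x₀ v)
    (hmin : ∀ x, ρ.r x v → T.dist r x₀ ≤ T.dist r x)
    {x : V} (hx : ρ.r x v) :
    (pa T r)^[T.dist r x + 1 - T.dist r x₀] x = pa T r x₀ := by
  set d := T.dist r x₀ with hd
  have key : ∀ a b : V, ρ.r a v → ρ.r b v → (tauLi T).Adj a b →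
      (pa T r)^[T.dist r a + 1 - d] a = pa T r x₀ →
      (pa T r)^[T.dist r b + 1 - d] b = pa T r x₀ := by
    intro a b ha hb hab hA
    have hda : d ≤ T.dist r a := hmin a ha
    have hdb : d ≤ T.dist r b := hmin b hb
    rcases tauLi_step hT r hab with ⟨h1, h2⟩ | ⟨h1, h2⟩ | ⟨h1, h2⟩
    · have e1 : T.dist r a + 1 - d = (T.dist r a - d) + 1 := by omega
      have e2 : T.dist r b + 1 - d = (T.dist r b - d) + 1 := by omega
      rw [e1, iterate_succ_apply] at hA
      rw [e2, iterate_succ_apply, ← h2, ← h1]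
      exact hA
    · have e2 : T.dist r b + 1 - d = (T.dist r a + 1 - d) + 2 := by omega
      rw [e2, iterate_add_apply _ _ 2]
      simpa [← h2] using hA
    · have e1 : T.dist r a + 1 - d = (T.dist r b + 1 - d) + 2 := by omega
      rw [e1, iterate_add_apply _ _ 2] at hA
      simpa [← h2] using hA
  have base : (pa T r)^[T.dist r x₀ + 1 - d] x₀ = pa T r x₀ := by
    have : T.dist r x₀ + 1 - d = 1 := by omega
    simp [this]
  exact block_walk_prop hconn v _ key hx₀ hx base

/-- **Key claim**: if the block of `v'` is adjacent in `T` to the block of `v`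
and contains a vertex strictly shallower than the minimum depth of the block of `v`,
then it contains the common parent of the minimum-depth vertices of the block of `v`. -/
lemma claimA {v v' u w x₀ : V} (hu : ρ.r u v) (hw : ρ.r w v')
    (hx₀ : ρ.r x₀ v) (hmin : ∀ x, ρ.r x v → T.dist r x₀ ≤ T.dist r x)
    (huw : T.Adj u w)
    (hy : ∃ y, ρ.r y v' ∧ T.dist r y < T.dist r x₀) :
    ρ.r (pa T r x₀) v' := by
  set d := T.dist r x₀ with hd
  have hdu : d ≤ T.dist r u := hmin u hu
  have hAu : (pa T r)^[T.dist r u + 1 - d] u = pa T r x₀ := anc_const hT r hconn hx₀ hmin hu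
  have hpar : ∀ x, ρ.r x v' → T.dist r x % 2 ≠ d % 2 := by
    intro x hx
    have h1 : T.dist r x % 2 = T.dist r w % 2 :=
      block_parity hT r hconn (ρ.trans hx (ρ.symm hw))
    have h2 : T.dist r u % 2 = d % 2 := block_parity hT r hconn (ρ.trans hu (ρ.symm hx₀))
    rcases tree_adj_dist hT r huw with h3 | h3 <;> omega
  rcases Nat.lt_or_ge (T.dist r w) d with hlt | hge
  · have h3 : T.dist r w + 1 = T.dist r u := by
      rcases tree_adj_dist hT r huw with h3 | h3 <;> omega
    have h4 : T.dist r u = d := by omega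
    have h5 : pa T r u = w := eq_pa hT r huw.symm h3
    have heq : pa T r x₀ = w := by
      rw [← hAu]
      have e : T.dist r u + 1 - d = 1 := by omega
      rw [e, iterate_one, h5]
    rw [heq]; exact hw
  · have hAw : (pa T r)^[T.dist r w + 1 - d] w = pa T r x₀ := by
      rcases tree_adj_dist hT r huw with h3 | h3
      · have h5 : pa T r w = u := eq_pa hT r huw (by omega)
        have e : T.dist r w + 1 - d = (T.dist r u + 1 - d) + 1 := by omega
        rw [e, iterate_succ_apply, h5, hAu]
      · have h5 : pa T r u = w := eq_pa hT r huw.symm (by omega)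
        have e : T.dist r u + 1 - d = (T.dist r w + 1 - d) + 1 := by omega
        rw [e, iterate_succ_apply, h5] at hAu
        exact hAu
    obtain ⟨y₀, hy₀, hylt⟩ := hy
    have key : ∀ a b : V, ρ.r a v' → ρ.r b v' → (tauLi T).Adj a b →
        ((d ≤ T.dist r a ∧ (pa T r)^[T.dist r a + 1 - d] a = pa T r x₀) ∨ ρ.r (pa T r x₀) v') →
        ((d ≤ T.dist r b ∧ (pa T r)^[T.dist r b + 1 - d] b = pa T r x₀) ∨ ρ.r (pa T r x₀) v') := by
      intro a b ha hb hab hPa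
      rcases hPa with ⟨hda, hAa⟩ | hdone
      · rcases tauLi_step hT r hab with ⟨h1, h2⟩ | ⟨h1, h2⟩ | ⟨h1, h2⟩
        · refine Or.inl ⟨by omega, ?_⟩
          have e1 : T.dist r a + 1 - d = (T.dist r a - d) + 1 := by omega
          have e2 : T.dist r b + 1 - d = (T.dist r b - d) + 1 := by omega
          rw [e1, iterate_succ_apply] at hAa
          rw [e2, iterate_succ_apply, ← h2, ← h1]
          exact hAa
        · refine Or.inl ⟨by omega, ?_⟩
          have e2 : T.dist r b + 1 - d = (T.dist r a + 1 - d) + 2 := by omega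
          rw [e2, iterate_add_apply _ _ 2]
          simpa [← h2] using hAa
        · rcases Nat.lt_or_ge (T.dist r b) d with hlt2 | hge2
          · have hb2 : T.dist r a = d + 1 := by
              have := hpar a ha
              omega
            have e : T.dist r a + 1 - d = 2 := by omega
            rw [e] at hAa
            have e2 : (pa T r)^[2] a = pa T r (pa T r a) := by
              rw [show (2:ℕ) = 1 + 1 by rfl, iterate_add_apply]; simp
            have hbc : b = pa T r x₀ := by rw [← hAa, e2]; exact h2
            exact Or.inr (hbc ▸ hb)
          · refine Or.inl ⟨hge2, ?_⟩
            have e1 : T.dist r a + 1 - d = (T.dist r b + 1 - d) + 2 := by omega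
            rw [e1, iterate_add_apply _ _ 2] at hAa
            simpa [← h2] using hAa
      · exact Or.inr hdone
    have := block_walk_prop hconn v' _ key hw hy₀ (Or.inl ⟨hge, hAw⟩)
    rcases this with ⟨hcontra, -⟩ | hdone
    · omega
    · exact hdone

end Blocks

end QuotTreeAux

open SimpleGraph Function QuotTreeAux

/-- **Every `τLi`-minor of a tree is a tree.**
If `T` is a finite tree and `ρ` is a partition of `V(T)` such that every block induces a
connected subgraph of `τLi(T)` and no block contains two vertices adjacent in `T`, then
the quotient graph `T/ρ` is a tree. -/
theorem quotient_of_tree_isTree {V : Type} [Fintype V] (T : SimpleGraph V) (hT : T.IsTree)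
    (ρ : Setoid V)
    (hconn : ∀ v : V, ((tauLi T).induce {u : V | ρ.r u v}).Connected)
    (hloop : ∀ u v : V, ρ.r u v → ¬ T.Adj u v) :
    (quotientGraph T ρ).IsTree := by
  classical
  obtain ⟨r⟩ := hT.isConnected.nonempty
  set Q := quotientGraph T ρ with hQ
  have hhom : ∀ {a b : V}, T.Adj a b → Q.Adj (Quotient.mk ρ a) (Quotient.mk ρ b) := by
    intro a b hab
    refine ⟨fun he => hloop a b (Quotient.eq.mp he) hab, a, b, rfl, rfl, hab⟩
  have hconnQ : Q.Connected := by
    refine Connected.map ⟨Quotient.mk ρ, fun {a b} h => hhom h⟩ ?_ hT.isConnected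
    exact fun β => ⟨β.out, Quotient.out_eq β⟩
  have hex : ∀ β : Quotient ρ, ∃ x₀, ρ.r x₀ β.out ∧
      ∀ x, ρ.r x β.out → T.dist r x₀ ≤ T.dist r x := by
    intro β
    obtain ⟨x₀, hx₀, hmin⟩ := Set.exists_min_image {u : V | ρ.r u β.out} (T.dist r)
      (Set.toFinite _) ⟨β.out, ρ.refl _⟩
    exact ⟨x₀, hx₀, hmin⟩
  choose minV hminV hminle using hex
  set dep : Quotient ρ → ℕ := fun β => T.dist r (minV β) with hdep
  have hadj_data : ∀ {β γ : Quotient ρ}, Q.Adj β γ →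
      ∃ u w, ρ.r u β.out ∧ ρ.r w γ.out ∧ T.Adj u w := by
    rintro β γ ⟨-, u, w, hu, hw, huw⟩
    exact ⟨u, w, Quotient.mk_eq_iff_out.mp hu, Quotient.mk_eq_iff_out.mp hw, huw⟩
  have hadj_parity : ∀ {β γ : Quotient ρ}, Q.Adj β γ → dep β % 2 ≠ dep γ % 2 := by
    intro β γ h
    obtain ⟨u, w, hu, hw, huw⟩ := hadj_data h
    have h1 : T.dist r u % 2 = dep β % 2 :=
      block_parity hT r hconn (ρ.trans hu (ρ.symm (hminV β)))
    have h2 : T.dist r w % 2 = dep γ % 2 :=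
      block_parity hT r hconn (ρ.trans hw (ρ.symm (hminV γ)))
    rcases tree_adj_dist hT r huw with h3 | h3 <;> omega
  have hshallow : ∀ {β γ : Quotient ρ}, Q.Adj β γ → dep γ < dep β →
      Quotient.mk ρ (pa T r (minV β)) = γ := by
    intro β γ h hlt
    obtain ⟨u, w, hu, hw, huw⟩ := hadj_data h
    refine Quotient.mk_eq_iff_out.mpr ?_
    exact claimA hT r hconn hu hw (hminV β) (hminle β) huw ⟨minV γ, hminV γ, hlt⟩
  refine ⟨hconnQ, ?_⟩
  intro b₀ c hc
  obtain ⟨β, hβmem', hβmax'⟩ := Finset.exists_max_image c.support.toFinset dep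
    ⟨b₀, List.mem_toFinset.mpr c.start_mem_support⟩
  rw [List.mem_toFinset] at hβmem'
  have hβmax : ∀ γ ∈ c.support, dep γ ≤ dep β := fun γ hγ =>
    hβmax' γ (List.mem_toFinset.mpr hγ)
  have hc' : (c.rotate β hβmem').IsCycle := hc.rotate hβmem'
  have hsupp : ∀ γ ∈ (c.rotate β hβmem').support, dep γ ≤ dep β := by
    intro γ hγ
    rcases (Walk.mem_support_iff _ ).mp hγ with rfl | htail
    · exact le_rfl
    · have := (Walk.support_rotate c β hβmem').mem_iff.mp htail
      exact hβmax γ (c.support_eq_cons ▸ List.mem_cons_of_mem _ this)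
  generalize hcc : c.rotate β hβmem' = c' at hc' hsupp
  cases c' with
  | nil => simpa using hc'.three_le_length
  | cons h p =>
    rename_i b₁
    obtain ⟨β₂, h₂, q₂, hq⟩ := Walk.exists_eq_cons_of_ne h.ne p.reverse
    have hb₁supp : b₁ ∈ (Walk.cons h p).support := by
      rw [Walk.support_cons]
      exact List.mem_cons_of_mem _ p.start_mem_support
    have hβ₂p : β₂ ∈ p.support := by
      have : β₂ ∈ p.reverse.support := by
        rw [hq, Walk.support_cons]
        exact List.mem_cons_of_mem _ q₂.start_mem_support
      rwa [Walk.support_reverse, List.mem_reverse] at this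
    have hβ₂supp : β₂ ∈ (Walk.cons h p).support := by
      rw [Walk.support_cons]; exact List.mem_cons_of_mem _ hβ₂p
    have hedge : s(β, β₂) ∈ p.edges := by
      have : s(β, β₂) ∈ p.reverse.edges := by
        rw [hq, Walk.edges_cons]; exact List.mem_cons_self
      rwa [Walk.edges_reverse, List.mem_reverse] at this
    have hnodup := hc'.edges_nodup
    rw [Walk.edges_cons] at hnodup
    have hne12 : b₁ ≠ β₂ := by
      rintro rfl
      exact (List.nodup_cons.mp hnodup).1 hedge
    have hlt₁ : dep b₁ < dep β := by
      have hle := hsupp b₁ hb₁supp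
      have := hadj_parity h
      omega
    have hlt₂ : dep β₂ < dep β := by
      have hle := hsupp β₂ hβ₂supp
      have := hadj_parity h₂
      omega
    exact hne12 ((hshallow h hlt₁).symm.trans (hshallow h₂ hlt₂))
end

section
/- Let T be a finite tree and let u ≠ w be two vertices of T that have a common neighbor in T. Let ρ be the partition of V(T) whose blocks are {u, w} and the singletons {x} for all other vertices x. Then the quotient graph T/ρ is a tree. -/

private lemma exists_delete_edge {V : Type} [Finite V] (G : SimpleGraph V)
    (hG : G.Connected) (h : ¬ G.IsAcyclic) :
    ∃ G' : SimpleGraph V, G'.Connected ∧ Nat.card G'.edgeSet + 1 = Nat.card G.edgeSet := by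
  classical
  rw [SimpleGraph.IsAcyclic] at h
  push_neg at h
  obtain ⟨a, c, hc⟩ := h
  have hlen := hc.three_le_length
  have hpos : 0 < c.edges.length := by
    rw [SimpleGraph.Walk.length_edges]; omega
  obtain ⟨e, he⟩ := List.exists_mem_of_length_pos hpos
  revert he
  induction e using Sym2.ind with
  | _ x y =>
  intro he
  have hxy : G.Adj x y := c.adj_of_mem_edges he
  have hreach : (G \ SimpleGraph.fromEdgeSet {s(x,y)}).Reachable x y :=
    (SimpleGraph.adj_and_reachable_delete_edges_iff_exists_cycle.2 ⟨a, c, hc, he⟩).2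
  set G' := G \ SimpleGraph.fromEdgeSet {s(x,y)} with hG'def
  have hstep : ∀ p q : V, G.Adj p q → G'.Reachable p q := by
    intro p q hpq
    by_cases h' : s(p,q) = s(x,y)
    · rw [Sym2.eq_iff] at h'
      rcases h' with ⟨rfl, rfl⟩ | ⟨rfl, rfl⟩
      · exact hreach
      · exact hreach.symm
    · refine SimpleGraph.Adj.reachable ?_
      rw [hG'def, SimpleGraph.sdiff_adj]
      exact ⟨hpq, by simp [SimpleGraph.fromEdgeSet_adj, h']⟩
  have hconn : G'.Connected := by
    have : Nonempty V := hG.nonempty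
    refine SimpleGraph.Connected.mk (fun p q => ?_)
    obtain ⟨wk⟩ := hG.preconnected p q
    induction wk with
    | nil => exact SimpleGraph.Reachable.refl _
    | cons hadj _ ih => exact (hstep _ _ hadj).trans ih
  have hEset : G'.edgeSet = G.edgeSet \ {s(x,y)} := by
    rw [hG'def, SimpleGraph.edgeSet_sdiff, SimpleGraph.edgeSet_fromEdgeSet,
      SimpleGraph.edgeSet_sdiff_sdiff_isDiag]
  refine ⟨G', hconn, ?_⟩
  rw [hEset]
  have hmem : s(x,y) ∈ G.edgeSet := hxy
  rw [Nat.card_coe_set_eq, Nat.card_coe_set_eq,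
    Set.ncard_diff_singleton_of_mem hmem]
  have h1 : 0 < G.edgeSet.ncard := (Set.ncard_pos (Set.toFinite _)).2 ⟨_, hmem⟩
  omega

private lemma connected_card_vert_le {V : Type} [Finite V] :
    ∀ (m : ℕ) (G : SimpleGraph V), Nat.card G.edgeSet = m → G.Connected →
      Nat.card V ≤ m + 1 := by
  intro m
  induction m using Nat.strong_induction_on with
  | _ m ih =>
    intro G hm hG
    by_cases hac : G.IsAcyclic
    · cases nonempty_fintype V
      classical
      have h1 := SimpleGraph.IsTree.card_edgeFinset (G := G) ⟨hG, hac⟩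
      rw [SimpleGraph.edgeFinset_card] at h1
      rw [Nat.card_eq_fintype_card]
      rw [← hm, Nat.card_eq_fintype_card]
      omega
    · obtain ⟨G', hconn, hcard⟩ := exists_delete_edge G hG hac
      have h2 := ih (Nat.card G'.edgeSet) (by omega) G' rfl hconn
      omega

private lemma connected_not_acyclic_card_le {V : Type} [Finite V] (G : SimpleGraph V)
    (hG : G.Connected) (h : ¬ G.IsAcyclic) : Nat.card V ≤ Nat.card G.edgeSet := by
  obtain ⟨G', hconn, hcard⟩ := exists_delete_edge G hG h
  have := connected_card_vert_le (Nat.card G'.edgeSet) G' rfl hconn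
  omega

/-- **Contracting two vertices of a tree with a common neighbor yields a tree.**
Let `T` be a finite tree, `u ≠ w` two vertices with a common neighbor in `T`, and `ρ`
the partition of `V(T)` whose blocks are `{u, w}` and the singletons of all other
vertices. Then `T/ρ` is a tree. -/
theorem contract_common_neighbor_pair_isTree {V : Type} [Fintype V]
    (T : SimpleGraph V) (hT : T.IsTree) (u w : V) (huw : u ≠ w)
    (hcommon : ∃ v : V, T.Adj u v ∧ T.Adj w v)
    (ρ : Setoid V)
    (hρ : ∀ x y : V, ρ.r x y ↔
      (x = y ∨ (x ∈ ({u, w} : Set V) ∧ y ∈ ({u, w} : Set V)))) :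
    (quotientGraph T ρ).IsTree := by
  classical
  obtain ⟨hTconn, hTac⟩ := hT
  obtain ⟨v, huv, hwv⟩ := hcommon
  have hvu : v ≠ u := huv.ne'
  have hvw : v ≠ w := hwv.ne'
  -- u and w are not adjacent in T
  have hnadj : ¬ T.Adj u w := by
    intro hadj
    have hp2 : (SimpleGraph.Walk.cons huv
        (SimpleGraph.Walk.cons hwv.symm SimpleGraph.Walk.nil) : T.Walk u w).IsPath := by
      simp [SimpleGraph.Walk.isPath_def, huw, hvu.symm, hvw]
    have hq := hTac.path_unique ⟨_, hp2⟩ (SimpleGraph.Path.singleton hadj)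
    have := congrArg (fun p : T.Path u w => p.1.length) hq
    simp [SimpleGraph.Path.singleton] at this
  -- the merged block
  have hruw : Quotient.mk ρ u = Quotient.mk ρ w :=
    Quotient.sound ((hρ u w).2 (Or.inr ⟨by simp, by simp⟩))
  have hmkne : ∀ x y : V, T.Adj x y → Quotient.mk ρ x ≠ Quotient.mk ρ y := by
    intro x y hxy hq
    rcases (hρ x y).1 (Quotient.exact hq) with rfl | ⟨hx, hy⟩
    · exact hxy.ne rfl
    · simp only [Set.mem_insert_iff, Set.mem_singleton_iff] at hx hy
      rcases hx with rfl | rfl <;> rcases hy with rfl | rfl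
      · exact hxy.ne rfl
      · exact hnadj hxy
      · exact hnadj hxy.symm
      · exact hxy.ne rfl
  set Q := quotientGraph T ρ with hQdef
  -- quotient hom
  let f : T →g Q := ⟨Quotient.mk ρ, fun {x y} hxy => ⟨hmkne x y hxy, x, y, rfl, rfl, hxy⟩⟩
  have hfsurj : Function.Surjective f := fun b => ⟨b.out, Quotient.out_eq b⟩
  have hQconn : Q.Connected := hTconn.map f hfsurj
  -- cardinality of the quotient
  let g : V → {x : V // x ≠ w} := fun x => if h : x = w then ⟨u, huw⟩ else ⟨x, h⟩
  have hgu : g u = ⟨u, huw⟩ := by simp [g, huw]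
  have hgw : g w = ⟨u, huw⟩ := by simp [g]
  have hg : ∀ a b : V, ρ.r a b → g a = g b := by
    intro a b hab
    rcases (hρ a b).1 hab with rfl | ⟨ha, hb⟩
    · rfl
    · simp only [Set.mem_insert_iff, Set.mem_singleton_iff] at ha hb
      rcases ha with rfl | rfl <;> rcases hb with rfl | rfl <;>
        simp [hgu, hgw]
  let e : Quotient ρ ≃ {x : V // x ≠ w} :=
    { toFun := Quotient.lift g hg
      invFun := fun x => Quotient.mk ρ x.1
      left_inv := by
        refine Quotient.ind ?_
        intro x
        by_cases hx : x = w
        · show Quotient.mk ρ (g x).1 = Quotient.mk ρ x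
          rw [hx, hgw]
          exact hruw
        · show Quotient.mk ρ (g x).1 = Quotient.mk ρ x
          simp [g, hx]
      right_inv := by
        rintro ⟨x, hx⟩
        show g x = _
        simp [g, hx] }
  have hcardQ : Nat.card (Quotient ρ) + 1 = Nat.card V := by
    rw [Nat.card_congr e]
    have h1 : Nat.card {x : V // x ≠ w} = Nat.card V - 1 := by
      rw [Nat.card_eq_fintype_card, Nat.card_eq_fintype_card]
      have := Fintype.card_subtype_compl (p := fun x : V => x = w)
      rw [Fintype.card_subtype_eq] at this
      exact this
    have : Nonempty V := ⟨u⟩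
    have h2 : 0 < Nat.card V := Nat.card_pos
    omega
  -- edge count of T
  have hET : Nat.card T.edgeSet + 1 = Nat.card V := by
    have h1 := SimpleGraph.IsTree.card_edgeFinset (G := T) ⟨hTconn, hTac⟩
    rw [SimpleGraph.edgeFinset_card] at h1
    rw [Nat.card_eq_fintype_card, Nat.card_eq_fintype_card]
    exact h1
  -- edge count of Q
  have hwv_mem : s(w, v) ∈ T.edgeSet := hwv
  have hEQ : Nat.card Q.edgeSet + 1 ≤ Nat.card T.edgeSet := by
    set s : Set (Sym2 V) := T.edgeSet \ {s(w, v)} with hsdef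
    let F : s → Q.edgeSet := fun e =>
      ⟨Sym2.map (Quotient.mk ρ) e.1, f.map_mem_edgeSet e.2.1⟩
    have hFsurj : Function.Surjective F := by
      rintro ⟨E, hE⟩
      revert hE
      induction E using Sym2.ind with
      | _ B B' =>
      intro hE
      obtain ⟨hne, x, y, hx, hy, hxy⟩ := hE
      by_cases hcase : s(x, y) = s(w, v)
      · have huv_ne : s(u, v) ≠ s(w, v) := by
          intro h
          rw [Sym2.eq_iff] at h
          rcases h with ⟨h1, -⟩ | ⟨h1, -⟩
          · exact huw h1
          · exact huv.ne h1
        refine ⟨⟨s(u, v), huv, huv_ne⟩, ?_⟩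
        apply Subtype.ext
        show Sym2.map (Quotient.mk ρ) s(u, v) = s(B, B')
        rw [Sym2.map_pair_eq, hruw]
        rw [Sym2.eq_iff] at hcase
        rcases hcase with ⟨rfl, rfl⟩ | ⟨rfl, rfl⟩
        · rw [hx, hy]
        · rw [hy, hx, Sym2.eq_swap]
      · exact ⟨⟨s(x, y), hxy, hcase⟩, Subtype.ext (by
          show Sym2.map (Quotient.mk ρ) s(x, y) = s(B, B')
          rw [Sym2.map_pair_eq, hx, hy])⟩
    have h1 : Nat.card Q.edgeSet ≤ Nat.card s :=
      Nat.card_le_card_of_surjective F hFsurj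
    have h2 : Nat.card s = Nat.card T.edgeSet - 1 := by
      rw [hsdef, Nat.card_coe_set_eq, Nat.card_coe_set_eq,
        Set.ncard_diff_singleton_of_mem hwv_mem]
    have h3 : 0 < Nat.card T.edgeSet := by
      rw [Nat.card_coe_set_eq]
      exact (Set.ncard_pos (Set.toFinite _)).2 ⟨_, hwv_mem⟩
    omega
  refine ⟨hQconn, ?_⟩
  by_contra hnot
  have h4 := connected_not_acyclic_card_le Q hQconn hnot
  omega
end

section
/- Let T₁ and T₂ be finite trees and let φ be a locally injective homomorphism from T₁ to T₂. Then φ is injective. -/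
open SimpleGraph

/-- In an acyclic target graph, a locally injective homomorphism maps paths to paths. -/
lemma map_isPath_of_locInj {V W : Type} {T₁ : SimpleGraph V} {T₂ : SimpleGraph W}
    (hac : T₂.IsAcyclic) (φ : T₁ →g T₂)
    (hloc : ∀ v : V, Set.InjOn φ (T₁.neighborSet v)) :
    ∀ {a b : V} (p : T₁.Walk a b), p.IsPath → (p.map φ).IsPath := by
  classical
  intro a b p
  induction p with
  | nil => simp
  | @cons a a' b h q ih =>
    intro hp
    rw [Walk.map_cons]
    refine (ih hp.of_cons).cons ?_
    intro hmem
    cases q with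
    | nil =>
      simp at hmem
      exact (φ.map_adj h).ne hmem
    | @cons a' a'' b h' q' =>
      have hqp : ((Walk.cons h' q').map φ).IsPath := ih hp.of_cons
      have hadj : T₂.Adj (φ a') (φ a) := (φ.map_adj h).symm
      set w := (Walk.cons h' q').map φ with hw
      have ht : (w.takeUntil (φ a) hmem).IsPath := hqp.takeUntil hmem
      have huniq : (⟨w.takeUntil (φ a) hmem, ht⟩ : T₂.Path (φ a') (φ a)) = Path.singleton hadj :=
        hac.path_unique _ _
      have ht' : w.takeUntil (φ a) hmem = Walk.cons hadj Walk.nil :=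
        congrArg Subtype.val huniq
      have hspec := w.take_spec hmem
      rw [ht', Walk.cons_append, Walk.nil_append] at hspec
      have hW : Walk.cons hadj (w.dropUntil (φ a) hmem)
          = Walk.cons (φ.map_adj h') (q'.map φ) := by rw [hspec, hw, Walk.map_cons]
      have hva : φ a = φ a'' := by injection hW with h1 h2
      have huu : a = a'' := hloc a' h.symm h' hva
      subst huu
      exact ((Walk.cons_isPath_iff _ _).mp hp).2 (by simp)

/-- **A locally injective homomorphism between trees is injective.**
If `T₁` and `T₂` are finite trees and `φ : T₁ → T₂` is a homomorphism that is injective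
on the neighborhood of every vertex, then `φ` is injective. -/
theorem locallyInjective_hom_between_trees_injective {V W : Type} [Fintype V] [Fintype W]
    (T₁ : SimpleGraph V) (T₂ : SimpleGraph W) (h₁ : T₁.IsTree) (h₂ : T₂.IsTree)
    (φ : T₁ →g T₂) (hloc : ∀ v : V, Set.InjOn φ (T₁.neighborSet v)) :
    Function.Injective φ := by
  classical
  intro a b hab
  obtain ⟨w⟩ := h₁.isConnected.preconnected a b
  obtain ⟨p, hp⟩ := w.toPath
  have himg : (p.map φ).IsPath := map_isPath_of_locInj h₂.IsAcyclic φ hloc p hp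
  have hq : ((p.map φ).copy rfl hab.symm).IsPath := by rwa [Walk.isPath_copy]
  have hnil : (p.map φ).copy rfl hab.symm = Walk.nil :=
    Walk.isPath_iff_eq_nil.mp hq
  have hlen : p.length = 0 := by
    have := congrArg Walk.length hnil
    simpa using this
  exact Walk.eq_of_length_eq_zero hlen
end

section
/- Let n ≥ 5 and let A be an n×n matrix with entries in {0,1}. Then the permanent of A equals the number of subgraphs of T_A that are isomorphic to T_{I_n}, where I_n is the n×n identity matrix. -/
/-- The raw vertex names for the tree `T_A`: the root `r`; `u j, w j, x j, y j, z j` for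
`j ∈ [n]`; `v i j` for `i, j ∈ [n]`; and candidate vertices `b i j`. -/
inductive TVertBase (n : ℕ) : Type
  | r : TVertBase n
  | u : Fin n → TVertBase n
  | w : Fin n → TVertBase n
  | x : Fin n → TVertBase n
  | y : Fin n → TVertBase n
  | z : Fin n → TVertBase n
  | v : Fin n → Fin n → TVertBase n
  | b : Fin n → Fin n → TVertBase n
  deriving DecidableEq, Fintype

/-- The (oriented) edges of `T_A`: `{v i j, v (i+1) j}`, `{b i j, v i j}`,
`{u j, v 1 j}`, `{v n j, w j}`, `{w j, x j}`, `{w j, y j}`, `{w j, z j}`, `{r, u j}`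
(indices written 1-based in the paper, 0-based here). -/
inductive TAdjBase (n : ℕ) : TVertBase n → TVertBase n → Prop
  | vv (i i' j : Fin n) : i.val + 1 = i'.val → TAdjBase n (.v i j) (.v i' j)
  | bv (i j : Fin n) : TAdjBase n (.b i j) (.v i j)
  | uv (j i : Fin n) : i.val = 0 → TAdjBase n (.u j) (.v i j)
  | vw (i j : Fin n) : i.val = n - 1 → TAdjBase n (.v i j) (.w j)
  | wx (j : Fin n) : TAdjBase n (.w j) (.x j)
  | wy (j : Fin n) : TAdjBase n (.w j) (.y j)
  | wz (j : Fin n) : TAdjBase n (.w j) (.z j)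
  | ru (j : Fin n) : TAdjBase n .r (.u j)

/-- The vertex set of `T_A`: all raw vertices, except that `b i j` is present only when
`A i j = 1`. -/
def TVert {n : ℕ} (A : Matrix (Fin n) (Fin n) ℕ) : Type :=
  {t : TVertBase n // ∀ i j : Fin n, t = .b i j → A i j = 1}

/-- The graph `T_A` associated with a 0/1 matrix `A`. -/
def TGraph {n : ℕ} (A : Matrix (Fin n) (Fin n) ℕ) : SimpleGraph (TVert A) where
  Adj s t := TAdjBase n s.1 t.1 ∨ TAdjBase n t.1 s.1
  symm := ⟨fun _ _ h => Or.symm h⟩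
  loopless := ⟨by
    rintro ⟨t, ht⟩ (h | h) <;> cases h <;> omega⟩

namespace TreeCount

variable {n : ℕ}

/-- Symmetrized adjacency at the base level. -/
def Adj' (n : ℕ) (s t : TVertBase n) : Prop := TAdjBase n s t ∨ TAdjBase n t s

lemma adj'_symm {s t : TVertBase n} (h : Adj' n s t) : Adj' n t s := Or.symm h

lemma tgraph_adj {A : Matrix (Fin n) (Fin n) ℕ} {s t : TVert A} :
    (TGraph A).Adj s t ↔ Adj' n s.1 t.1 := Iff.rfl

lemma nbr_r {t : TVertBase n} (h : Adj' n .r t) : ∃ j, t = .u j := by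
  rcases h with h | h <;> cases h
  exact ⟨_, rfl⟩

lemma nbr_u {j : Fin n} {t : TVertBase n} (h : Adj' n (.u j) t) :
    t = .r ∨ ∃ i : Fin n, i.val = 0 ∧ t = .v i j := by
  rcases h with h | h <;> cases h
  · exact Or.inr ⟨_, ‹_›, rfl⟩
  · exact Or.inl rfl

lemma nbr_v {i j : Fin n} {t : TVertBase n} (h : Adj' n (.v i j) t) :
    t = .b i j ∨ (∃ i' : Fin n, (i'.val + 1 = i.val ∨ i.val + 1 = i'.val) ∧ t = .v i' j) ∨
      (i.val = 0 ∧ t = .u j) ∨ (i.val = n - 1 ∧ t = .w j) := by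
  rcases h with h | h <;> cases h
  · exact Or.inr (Or.inl ⟨_, Or.inr ‹_›, rfl⟩)
  · exact Or.inr (Or.inr (Or.inr ⟨‹_›, rfl⟩))
  · exact Or.inr (Or.inl ⟨_, Or.inl ‹_›, rfl⟩)
  · exact Or.inl rfl
  · exact Or.inr (Or.inr (Or.inl ⟨‹_›, rfl⟩))

lemma nbr_w {j : Fin n} {t : TVertBase n} (h : Adj' n (.w j) t) :
    t = .x j ∨ t = .y j ∨ t = .z j ∨ ∃ i : Fin n, i.val = n - 1 ∧ t = .v i j := by
  rcases h with h | h <;> cases h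
  · exact Or.inl rfl
  · exact Or.inr (Or.inl rfl)
  · exact Or.inr (Or.inr (Or.inl rfl))
  · exact Or.inr (Or.inr (Or.inr ⟨_, ‹_›, rfl⟩))

lemma nbr_b {i j : Fin n} {t : TVertBase n} (h : Adj' n (.b i j) t) : t = .v i j := by
  rcases h with h | h <;> cases h
  rfl

lemma nbr_x {j : Fin n} {t : TVertBase n} (h : Adj' n (.x j) t) : t = .w j := by
  rcases h with h | h <;> cases h
  rfl


variable {n : ℕ} {A : Matrix (Fin n) (Fin n) ℕ}

/-- Skeleton vertices (always present). -/
def mkR : TVert A := ⟨.r, by rintro i j ⟨⟩⟩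
def mkU (j : Fin n) : TVert A := ⟨.u j, by rintro i j ⟨⟩⟩
def mkW (j : Fin n) : TVert A := ⟨.w j, by rintro i j ⟨⟩⟩
def mkX (j : Fin n) : TVert A := ⟨.x j, by rintro i j ⟨⟩⟩
def mkY (j : Fin n) : TVert A := ⟨.y j, by rintro i j ⟨⟩⟩
def mkZ (j : Fin n) : TVert A := ⟨.z j, by rintro i j ⟨⟩⟩
def mkV (i j : Fin n) : TVert A := ⟨.v i j, by rintro i' j' ⟨⟩⟩
def mkB (i j : Fin n) (h : A i j = 1) : TVert A := ⟨.b i j, by rintro i' j' ⟨⟩; exact h⟩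
/-- `b i i` as a vertex of `T_{I_n}`. -/
def mkB1 (i : Fin n) : TVert (1 : Matrix (Fin n) (Fin n) ℕ) :=
  mkB i i (Matrix.one_apply_eq i)

/-- Every vertex other than the root has at most four possible neighbors. -/
lemma nbrs_bounded (hn : 5 ≤ n) (t : TVertBase n) (ht : t ≠ .r) :
    ∃ s₁ s₂ s₃ s₄ : TVertBase n,
      ∀ t', Adj' n t t' → t' = s₁ ∨ t' = s₂ ∨ t' = s₃ ∨ t' = s₄ := by
  have hn0 : 0 < n := by omega
  cases t with
  | r => exact absurd rfl ht
  | u j =>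
    refine ⟨.r, .v ⟨0, hn0⟩ j, .r, .r, fun t' h => ?_⟩
    rcases nbr_u h with h | ⟨i, hi, rfl⟩
    · tauto
    · refine Or.inr (Or.inl ?_)
      congr 1
      apply Fin.ext
      show i.val = 0
      exact hi
  | w j =>
    refine ⟨.x j, .y j, .z j, .v ⟨n - 1, by omega⟩ j, fun t' h => ?_⟩
    rcases nbr_w h with h | h | h | ⟨i, hi, rfl⟩
    · tauto
    · tauto
    · tauto
    · refine Or.inr (Or.inr (Or.inr ?_))
      congr 1
      apply Fin.ext
      show i.val = n - 1
      exact hi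
  | x j => exact ⟨.w j, .w j, .w j, .w j, fun t' h => Or.inl (nbr_x h)⟩
  | y j =>
    refine ⟨.w j, .w j, .w j, .w j, fun t' h => Or.inl ?_⟩
    rcases h with h | h <;> cases h
    rfl
  | z j =>
    refine ⟨.w j, .w j, .w j, .w j, fun t' h => Or.inl ?_⟩
    rcases h with h | h <;> cases h
    rfl
  | b i j => exact ⟨.v i j, .v i j, .v i j, .v i j, fun t' h => Or.inl (nbr_b h)⟩
  | v i j =>
    refine ⟨.v ⟨i.val - 1, by omega⟩ j, .v ⟨min (i.val + 1) (n - 1), by omega⟩ j, .b i j,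
      if i.val = 0 then .u j else .w j, fun t' h => ?_⟩
    rcases nbr_v h with h | ⟨i', hi', rfl⟩ | ⟨hi, rfl⟩ | ⟨hi, rfl⟩
    · tauto
    · rcases hi' with hi' | hi'
      · refine Or.inl ?_
        congr 1
        apply Fin.ext
        show i'.val = i.val - 1
        omega
      · refine Or.inr (Or.inl ?_)
        congr 1
        apply Fin.ext
        show i'.val = min (i.val + 1) (n - 1)
        omega
    · simp [hi]
    · have : ¬ i.val = 0 := by omega
      simp [this]

instance : Finite (TVert A) := by unfold TVert; infer_instance

/-- Column relabeling of vertices. -/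
def cmap (σ : Fin n → Fin n) : TVertBase n → TVertBase n
  | .r => .r
  | .u j => .u (σ j)
  | .w j => .w (σ j)
  | .x j => .x (σ j)
  | .y j => .y (σ j)
  | .z j => .z (σ j)
  | .v i j => .v i (σ j)
  | .b i j => .b i (σ j)

lemma cmap_adj (σ : Fin n → Fin n) {s t : TVertBase n} (h : TAdjBase n s t) :
    TAdjBase n (cmap σ s) (cmap σ t) := by
  cases h with
  | vv i i' j h => exact .vv i i' (σ j) h
  | bv i j => exact .bv i (σ j)
  | uv j i h => exact .uv (σ j) i h
  | vw i j h => exact .vw i (σ j) h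
  | wx j => exact .wx (σ j)
  | wy j => exact .wy (σ j)
  | wz j => exact .wz (σ j)
  | ru j => exact .ru (σ j)

lemma cmap_cmap (σ τ : Fin n → Fin n) (t : TVertBase n) :
    cmap σ (cmap τ t) = cmap (σ ∘ τ) t := by cases t <;> rfl

lemma cmap_id (t : TVertBase n) : cmap id t = t := by cases t <;> rfl

lemma cmap_adj'_iff (σ : Equiv.Perm (Fin n)) {s t : TVertBase n} :
    Adj' n (cmap σ s) (cmap σ t) ↔ Adj' n s t := by
  constructor
  · rintro (h | h)
    · have := cmap_adj σ.symm h
      rw [cmap_cmap, cmap_cmap] at this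
      simp only [Equiv.symm_comp_self, cmap_id] at this
      exact Or.inl this
    · have := cmap_adj σ.symm h
      rw [cmap_cmap, cmap_cmap] at this
      simp only [Equiv.symm_comp_self, cmap_id] at this
      exact Or.inr this
  · rintro (h | h)
    · exact Or.inl (cmap_adj σ h)
    · exact Or.inr (cmap_adj σ h)

/-- The subgraph of `T_A` associated to a permutation `π`:
all skeleton vertices, plus `b i (π i)`, with all available edges. -/
def Sπ (A : Matrix (Fin n) (Fin n) ℕ) (π : Equiv.Perm (Fin n)) : (TGraph A).Subgraph where
  verts := {t : TVert A | ∀ i j : Fin n, t.1 = .b i j → π i = j}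
  Adj a b := (TGraph A).Adj a b ∧ (∀ i j : Fin n, a.1 = .b i j → π i = j) ∧
    (∀ i j : Fin n, b.1 = .b i j → π i = j)
  adj_sub h := h.1
  edge_vert h := h.2.1
  symm := ⟨by rintro a b ⟨h1, h2, h3⟩; exact ⟨h1.symm, h3, h2⟩⟩

lemma mem_Sπ_verts {π : Equiv.Perm (Fin n)} {t : TVert A} :
    t ∈ (Sπ A π).verts ↔ ∀ i j : Fin n, t.1 = .b i j → π i = j := Iff.rfl

/-- The isomorphism `(Sπ A π).coe ≃g T_{I_n}`. -/
noncomputable def SπIso (A : Matrix (Fin n) (Fin n) ℕ) (π : Equiv.Perm (Fin n))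
    (hπ : ∀ i, A i (π i) = 1) :
    (Sπ A π).coe ≃g TGraph (1 : Matrix (Fin n) (Fin n) ℕ) where
  toFun a := ⟨cmap π.symm a.1.1, by
    intro i j h
    obtain ⟨⟨t, ht⟩, hmem⟩ := a
    cases t <;> simp only [cmap] at h <;> cases h
    rename_i i' j'
    have : π i = j' := hmem i j' rfl
    have : π.symm j' = i := by rw [← this, Equiv.symm_apply_apply]
    rw [this, Matrix.one_apply_eq]⟩
  invFun a := ⟨⟨cmap π a.1, by
      intro i j h
      obtain ⟨t, ht⟩ := a
      cases t <;> simp only [cmap] at h <;> cases h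
      rename_i i' j'
      have h1 : (1 : Matrix (Fin n) (Fin n) ℕ) i j' = 1 := ht i j' rfl
      have : i = j' := by
        by_contra hne
        rw [Matrix.one_apply_ne hne] at h1
        exact absurd h1 (by norm_num)
      subst this
      exact hπ i, ⟩, by
    intro i j h
    obtain ⟨t, ht⟩ := a
    cases t <;> simp only [cmap] at h <;> cases h
    rename_i j'
    have h1 : (1 : Matrix (Fin n) (Fin n) ℕ) i j' = 1 := ht i j' rfl
    have : i = j' := by
      by_contra hne
      rw [Matrix.one_apply_ne hne] at h1
      exact absurd h1 (by norm_num)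
    rw [this]⟩
  left_inv := by
    rintro ⟨⟨t, ht⟩, hmem⟩
    apply Subtype.ext; apply Subtype.ext
    show cmap π (cmap π.symm t) = t
    rw [cmap_cmap]
    simp only [Equiv.self_comp_symm, cmap_id]
  right_inv := by
    rintro ⟨t, ht⟩
    apply Subtype.ext
    show cmap π.symm (cmap π t) = t
    rw [cmap_cmap]
    simp only [Equiv.symm_comp_self, cmap_id]
  map_rel_iff' := by
    rintro a b
    show Adj' n (cmap π.symm a.1.1) (cmap π.symm b.1.1) ↔ (Sπ A π).coe.Adj a b
    rw [cmap_adj'_iff]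
    constructor
    · intro h
      exact ⟨h, a.2, b.2⟩
    · rintro ⟨h, -, -⟩
      exact h

lemma edgeSet_ncard_eq {V W : Type*} {G : SimpleGraph V} {H : SimpleGraph W}
    (S : G.Subgraph) (φ : S.coe ≃g H) : S.edgeSet.ncard = H.edgeSet.ncard := by
  have h1 : S.coe.edgeSet.ncard = H.edgeSet.ncard := by
    rw [← Nat.card_coe_set_eq, ← Nat.card_coe_set_eq]
    exact Nat.card_congr φ.mapEdgeSet
  rw [← h1, ← SimpleGraph.Subgraph.image_coe_edgeSet_coe]
  exact Set.ncard_image_of_injective _ (Sym2.map.injective Subtype.val_injective)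

lemma pick3 {α β : Type*} (F : β → α) (hF : Function.Injective F) (X Y Z : β)
    (hXY : X ≠ Y) (hXZ : X ≠ Z) (hYZ : Y ≠ Z) (a b c : α)
    (hab : a ≠ b) (hac : a ≠ c) (hbc : b ≠ c)
    (hX : F X = a ∨ F X = b ∨ F X = c) (hY : F Y = a ∨ F Y = b ∨ F Y = c)
    (hZ : F Z = a ∨ F Z = b ∨ F Z = c) : ∃ p, F p = a := by
  have h1 : F X ≠ F Y := fun h => hXY (hF h)
  have h2 : F X ≠ F Z := fun h => hXZ (hF h)
  have h3 : F Y ≠ F Z := fun h => hYZ (hF h)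
  rcases hX with hX | hX | hX <;> rcases hY with hY | hY | hY <;> rcases hZ with hZ | hZ | hZ <;>
    first
      | exact ⟨X, hX⟩
      | exact ⟨Y, hY⟩
      | exact ⟨Z, hZ⟩
      | simp_all

lemma exists_perm_of_iso (hn : 5 ≤ n) {A : Matrix (Fin n) (Fin n) ℕ}
    (S : (TGraph A).Subgraph)
    (φ : S.coe ≃g TGraph (1 : Matrix (Fin n) (Fin n) ℕ)) :
    ∃ π : Equiv.Perm (Fin n), (∀ i, A i (π i) = 1) ∧ S = Sπ A π := by
  classical
  set f : TVert (1 : Matrix (Fin n) (Fin n) ℕ) → TVert A :=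
    fun p => ((φ.symm p : S.verts) : TVert A) with hf
  have hinj : Function.Injective f := by
    intro p q h
    exact φ.symm.toEquiv.injective (Subtype.ext h)
  have hinj' : Function.Injective (fun p => (f p).1) := by
    intro p q h
    exact hinj (Subtype.ext h)
  have hSadj : ∀ p q, S.Adj (f p) (f q) ↔ (TGraph (1 : Matrix (Fin n) (Fin n) ℕ)).Adj p q := by
    intro p q
    rw [← φ.symm.map_rel_iff]
    exact Iff.rfl
  have hadj : ∀ p q, (TGraph (1 : Matrix (Fin n) (Fin n) ℕ)).Adj p q →
      Adj' n (f p).1 (f q).1 := by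
    intro p q h
    exact tgraph_adj.1 (S.adj_sub ((hSadj p q).2 h))
  have hrange : S.verts = Set.range f := by
    ext a
    constructor
    · intro ha
      exact ⟨φ ⟨a, ha⟩, by simp [hf]⟩
    · rintro ⟨p, rfl⟩
      exact (φ.symm p).2
  -- Step (a): the root goes to the root
  have hfr : (f mkR).1 = TVertBase.r := by
    by_contra hne
    obtain ⟨s₁, s₂, s₃, s₄, hs⟩ := nbrs_bounded hn _ hne
    have hadjU : ∀ j : Fin n, Adj' n (f mkR).1 (f (mkU j)).1 :=
      fun j => hadj _ _ (Or.inl (.ru j))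
    have hcard : (Finset.univ : Finset (Fin 5)).card ≤
        ({s₁, s₂, s₃, s₄} : Finset (TVertBase n)).card := by
      apply Finset.card_le_card_of_injOn (fun k => (f (mkU ⟨k.1, by omega⟩)).1)
      · intro k _
        have := hs _ (hadjU ⟨k.1, by omega⟩)
        simp only [Finset.mem_coe, Finset.mem_insert, Finset.mem_singleton]
        tauto
      · intro k _ l _ hkl
        have h1 := hinj' hkl
        have h2 := congrArg Subtype.val h1
        injection h2 with h3
        injection h3 with h4
        exact Fin.ext h4
    have h4 : ({s₁, s₂, s₃, s₄} : Finset (TVertBase n)).card ≤ 4 := by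
      refine le_trans (Finset.card_insert_le _ _) (Nat.succ_le_succ ?_)
      refine le_trans (Finset.card_insert_le _ _) (Nat.succ_le_succ ?_)
      refine le_trans (Finset.card_insert_le _ _) (Nat.succ_le_succ ?_)
      simp
    simp only [Finset.card_univ, Fintype.card_fin] at hcard
    omega

  -- Step (b): the `u`'s go to `u`'s, via a map ρ
  have hU : ∀ j : Fin n, ∃ k, (f (mkU j)).1 = TVertBase.u k := by
    intro j
    have h := hadj mkR (mkU j) (Or.inl (.ru j))
    rw [hfr] at h
    exact nbr_r h
  choose ρ hρ using hU
  have hρinj : Function.Injective ρ := by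
    intro j k hjk
    have h1 : (f (mkU j)).1 = (f (mkU k)).1 := by rw [hρ j, hρ k, hjk]
    have h2 := congrArg Subtype.val (hinj' h1)
    injection h2
  -- Step (c): the paths go to paths
  have hV' : ∀ k (hk : k < n) (j : Fin n), (f (mkV ⟨k, hk⟩ j)).1 = TVertBase.v ⟨k, hk⟩ (ρ j) := by
    intro k
    induction k using Nat.strong_induction_on with
    | _ k IH =>
      match k with
      | 0 =>
        intro hk j
        have h := hadj (mkU j) (mkV ⟨0, hk⟩ j) (Or.inl (.uv j ⟨0, hk⟩ rfl))
        rw [hρ j] at h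
        rcases nbr_u h with h | ⟨i', hi', hv⟩
        · exfalso
          have heq : f (mkV ⟨0, hk⟩ j) = f mkR := Subtype.ext (by rw [h, hfr])
          cases congrArg Subtype.val (hinj heq)
        · rw [hv]
          congr 1
          apply Fin.ext
          show i'.val = 0
          exact hi'
      | m + 1 =>
        intro hk j
        have hm : m < n := by omega
        have IHm := IH m (by omega) hm j
        have h := hadj (mkV ⟨m, hm⟩ j) (mkV ⟨m + 1, hk⟩ j) (Or.inl (.vv _ _ j rfl))
        rw [IHm] at h
        rcases nbr_v h with hb | ⟨i', hi', hv⟩ | ⟨h0, hu⟩ | ⟨hl, hw⟩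
        · exfalso
          by_cases hq : m + 2 < n
          · have hq1 := hadj (mkV ⟨m + 1, hk⟩ j) (mkV ⟨m + 2, hq⟩ j) (Or.inl (.vv _ _ j rfl))
            rw [hb] at hq1
            have h5 := nbr_b hq1
            have heq : f (mkV ⟨m + 2, hq⟩ j) = f (mkV ⟨m, hm⟩ j) :=
              Subtype.ext (by rw [h5, IHm])
            have h6 := congrArg Subtype.val (hinj heq)
            injection h6 with h7 h8
            have h9 : m + 2 = m := congrArg Fin.val h7
            omega
          · have hq2 : ((⟨m + 1, hk⟩ : Fin n)).val = n - 1 := by show m + 1 = n - 1; omega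
            have hq1 := hadj (mkV ⟨m + 1, hk⟩ j) (mkW j) (Or.inl (.vw ⟨m + 1, hk⟩ j hq2))
            rw [hb] at hq1
            have h5 := nbr_b hq1
            have heq : f (mkW j) = f (mkV ⟨m, hm⟩ j) := Subtype.ext (by rw [h5, IHm])
            cases congrArg Subtype.val (hinj heq)
        · rcases hi' with hi' | hi'
          · exfalso
            have hi'2 : i'.val + 1 = m := hi'
            have hm1 : m - 1 < n := by omega
            have hie : i' = ⟨m - 1, hm1⟩ := by
              apply Fin.ext
              show i'.val = m - 1
              omega
            subst hie
            have IHm1 := IH (m - 1) (by omega) hm1 j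
            have heq : f (mkV ⟨m + 1, hk⟩ j) = f (mkV ⟨m - 1, hm1⟩ j) :=
              Subtype.ext (by rw [hv, IHm1])
            have h6 := congrArg Subtype.val (hinj heq)
            injection h6 with h7 h8
            have h9 : m + 1 = m - 1 := congrArg Fin.val h7
            omega
          · have hi'2 : m + 1 = i'.val := hi'
            rw [hv]
            congr 1
            apply Fin.ext
            show i'.val = m + 1
            omega
        · exfalso
          have heq : f (mkV ⟨m + 1, hk⟩ j) = f (mkU j) := Subtype.ext (by rw [hu, hρ j])
          cases congrArg Subtype.val (hinj heq)
        · exfalso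
          have h0' : m = n - 1 := hl
          omega
  have hV : ∀ (i j : Fin n), (f (mkV i j)).1 = TVertBase.v i (ρ j) :=
    fun i j => hV' i.val i.isLt j
  -- Step (d): the `w`'s
  have hn1 : n - 1 < n := by omega
  have hW : ∀ j : Fin n, (f (mkW j)).1 = TVertBase.w (ρ j) := by
    intro j
    have h := hadj (mkV ⟨n - 1, hn1⟩ j) (mkW j) (Or.inl (.vw _ j rfl))
    rw [hV' (n - 1) hn1 j] at h
    rcases nbr_v h with hb | ⟨i', hi', hv⟩ | ⟨h0, hu⟩ | ⟨hl, hw⟩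
    · exfalso
      have h2 := hadj (mkW j) (mkX j) (Or.inl (.wx j))
      rw [hb] at h2
      have h5 := nbr_b h2
      have heq : f (mkX j) = f (mkV ⟨n - 1, hn1⟩ j) :=
        Subtype.ext (by rw [h5, hV' _ hn1 j])
      cases congrArg Subtype.val (hinj heq)
    · exfalso
      rcases hi' with hi' | hi'
      · have hi'2 : i'.val + 1 = n - 1 := hi'
        have hm2 : n - 2 < n := by omega
        have hie : i' = ⟨n - 2, hm2⟩ := by
          apply Fin.ext
          show i'.val = n - 2
          omega
        subst hie
        have heq : f (mkW j) = f (mkV ⟨n - 2, hm2⟩ j) :=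
          Subtype.ext (by rw [hv, hV' _ hm2 j])
        cases congrArg Subtype.val (hinj heq)
      · have hi'2 : n - 1 + 1 = i'.val := hi'
        have := i'.isLt
        omega
    · exfalso
      have h0' : n - 1 = 0 := h0
      omega
    · exact hw
  -- Step (f): the leaves
  have hX : ∀ j : Fin n, (f (mkX j)).1 = TVertBase.x (ρ j) ∨ (f (mkX j)).1 = TVertBase.y (ρ j) ∨
      (f (mkX j)).1 = TVertBase.z (ρ j) := by
    intro j
    have h := hadj (mkW j) (mkX j) (Or.inl (.wx j))
    rw [hW j] at h
    rcases nbr_w h with h | h | h | ⟨i, hi, hv⟩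
    · tauto
    · tauto
    · tauto
    · exfalso
      have heq : f (mkX j) = f (mkV i j) := Subtype.ext (by rw [hv, hV i j])
      cases congrArg Subtype.val (hinj heq)
  have hY : ∀ j : Fin n, (f (mkY j)).1 = TVertBase.x (ρ j) ∨ (f (mkY j)).1 = TVertBase.y (ρ j) ∨
      (f (mkY j)).1 = TVertBase.z (ρ j) := by
    intro j
    have h := hadj (mkW j) (mkY j) (Or.inl (.wy j))
    rw [hW j] at h
    rcases nbr_w h with h | h | h | ⟨i, hi, hv⟩
    · tauto
    · tauto
    · tauto
    · exfalso
      have heq : f (mkY j) = f (mkV i j) := Subtype.ext (by rw [hv, hV i j])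
      cases congrArg Subtype.val (hinj heq)
  have hZ : ∀ j : Fin n, (f (mkZ j)).1 = TVertBase.x (ρ j) ∨ (f (mkZ j)).1 = TVertBase.y (ρ j) ∨
      (f (mkZ j)).1 = TVertBase.z (ρ j) := by
    intro j
    have h := hadj (mkW j) (mkZ j) (Or.inl (.wz j))
    rw [hW j] at h
    rcases nbr_w h with h | h | h | ⟨i, hi, hv⟩
    · tauto
    · tauto
    · tauto
    · exfalso
      have heq : f (mkZ j) = f (mkV i j) := Subtype.ext (by rw [hv, hV i j])
      cases congrArg Subtype.val (hinj heq)
  -- Step (e): the `b`'s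
  have hB : ∀ i : Fin n, (f (mkB1 i)).1 = TVertBase.b i (ρ i) := by
    intro i
    have h := hadj (mkB1 i) (mkV i i) (Or.inl (.bv i i))
    rw [hV i i] at h
    have h' := adj'_symm h
    rcases nbr_v h' with hb | ⟨i', hi', hv⟩ | ⟨h0, hu⟩ | ⟨hl, hw⟩
    · exact hb
    · exfalso
      have heq : f (mkB1 i) = f (mkV i' i) := Subtype.ext (by rw [hv, hV i' i])
      cases congrArg Subtype.val (hinj heq)
    · exfalso
      have heq : f (mkB1 i) = f (mkU i) := Subtype.ext (by rw [hu, hρ i])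
      cases congrArg Subtype.val (hinj heq)
    · exfalso
      have heq : f (mkB1 i) = f (mkW i) := Subtype.ext (by rw [hw, hW i])
      cases congrArg Subtype.val (hinj heq)
  -- assemble the permutation
  have hρbij : Function.Bijective ρ := Finite.injective_iff_bijective.1 hρinj
  refine ⟨Equiv.ofBijective ρ hρbij, ?_, ?_⟩
  · intro i
    have h1 : (Equiv.ofBijective ρ hρbij) i = ρ i := rfl
    rw [h1]
    exact (f (mkB1 i)).2 i (ρ i) (hB i)
  set π := Equiv.ofBijective ρ hρbij with hπdef
  have hπρ : ∀ i, π i = ρ i := fun i => rfl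
  have hA1 : ∀ i, A i (ρ i) = 1 := fun i => (f (mkB1 i)).2 i (ρ i) (hB i)
  -- vertex sets agree
  have hverts : S.verts = (Sπ A π).verts := by
    ext a
    constructor
    · intro ha
      rw [hrange] at ha
      obtain ⟨p, rfl⟩ := ha
      show ∀ i j, (f p).1 = TVertBase.b i j → π i = j
      obtain ⟨pv, hp⟩ := p
      cases pv with
      | r =>
        intro i j h
        rw [show (⟨TVertBase.r, hp⟩ : TVert (1 : Matrix (Fin n) (Fin n) ℕ)) = mkR from rfl,
          hfr] at h
        cases h
      | u j' =>
        intro i j h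
        rw [show (⟨TVertBase.u j', hp⟩ : TVert (1 : Matrix (Fin n) (Fin n) ℕ)) = mkU j' from rfl,
          hρ j'] at h
        cases h
      | w j' =>
        intro i j h
        rw [show (⟨TVertBase.w j', hp⟩ : TVert (1 : Matrix (Fin n) (Fin n) ℕ)) = mkW j' from rfl,
          hW j'] at h
        cases h
      | x j' =>
        intro i j h
        rw [show (⟨TVertBase.x j', hp⟩ : TVert (1 : Matrix (Fin n) (Fin n) ℕ)) = mkX j'
          from rfl] at h
        rcases hX j' with h' | h' | h' <;> rw [h'] at h <;> cases h
      | y j' =>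
        intro i j h
        rw [show (⟨TVertBase.y j', hp⟩ : TVert (1 : Matrix (Fin n) (Fin n) ℕ)) = mkY j'
          from rfl] at h
        rcases hY j' with h' | h' | h' <;> rw [h'] at h <;> cases h
      | z j' =>
        intro i j h
        rw [show (⟨TVertBase.z j', hp⟩ : TVert (1 : Matrix (Fin n) (Fin n) ℕ)) = mkZ j'
          from rfl] at h
        rcases hZ j' with h' | h' | h' <;> rw [h'] at h <;> cases h
      | v i' j' =>
        intro i j h
        rw [show (⟨TVertBase.v i' j', hp⟩ : TVert (1 : Matrix (Fin n) (Fin n) ℕ)) = mkV i' j'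
          from rfl, hV i' j'] at h
        cases h
      | b i' j' =>
        intro i j h
        have h1 : (1 : Matrix (Fin n) (Fin n) ℕ) i' j' = 1 := hp i' j' rfl
        have hij : i' = j' := by
          by_contra hne
          rw [Matrix.one_apply_ne hne] at h1
          exact absurd h1 (by norm_num)
        subst hij
        rw [show (⟨TVertBase.b i' i', hp⟩ : TVert (1 : Matrix (Fin n) (Fin n) ℕ)) = mkB1 i'
          from rfl, hB i'] at h
        injection h with h2 h3
        subst h2
        rw [hπρ, h3]
    · intro ha
      rw [hrange]
      have ha' : ∀ i j : Fin n, a.1 = TVertBase.b i j → π i = j := ha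
      obtain ⟨t, htv⟩ := a
      cases t with
      | r => exact ⟨mkR, Subtype.ext (by rw [hfr])⟩
      | u k =>
        refine ⟨mkU (π.symm k), Subtype.ext ?_⟩
        rw [hρ]
        show TVertBase.u (π (π.symm k)) = TVertBase.u k
        rw [π.apply_symm_apply]
      | w k =>
        refine ⟨mkW (π.symm k), Subtype.ext ?_⟩
        rw [hW]
        show TVertBase.w (π (π.symm k)) = TVertBase.w k
        rw [π.apply_symm_apply]
      | v i k =>
        refine ⟨mkV i (π.symm k), Subtype.ext ?_⟩
        rw [hV]
        show TVertBase.v i (π (π.symm k)) = TVertBase.v i k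
        rw [π.apply_symm_apply]
      | b i k =>
        have hik : π i = k := ha' i k rfl
        refine ⟨mkB1 i, Subtype.ext ?_⟩
        rw [hB]
        show TVertBase.b i (π i) = TVertBase.b i k
        rw [hik]
      | x k =>
        have hk : ρ (π.symm k) = k := π.apply_symm_apply k
        have hd1 : TVertBase.x (ρ (π.symm k)) ≠ TVertBase.y (ρ (π.symm k)) := by
          intro h; cases h
        have hd2 : TVertBase.x (ρ (π.symm k)) ≠ TVertBase.z (ρ (π.symm k)) := by
          intro h; cases h
        have hd3 : TVertBase.y (ρ (π.symm k)) ≠ TVertBase.z (ρ (π.symm k)) := by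
          intro h; cases h
        have hne1 : mkX (A := (1 : Matrix (Fin n) (Fin n) ℕ)) (π.symm k) ≠ mkY (π.symm k) := by
          intro h
          cases congrArg Subtype.val h
        have hne2 : mkX (A := (1 : Matrix (Fin n) (Fin n) ℕ)) (π.symm k) ≠ mkZ (π.symm k) := by
          intro h
          cases congrArg Subtype.val h
        have hne3 : mkY (A := (1 : Matrix (Fin n) (Fin n) ℕ)) (π.symm k) ≠ mkZ (π.symm k) := by
          intro h
          cases congrArg Subtype.val h
        obtain ⟨p, hp⟩ := pick3 (fun p => (f p).1) hinj' (mkX (π.symm k)) (mkY (π.symm k))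
          (mkZ (π.symm k)) hne1 hne2 hne3 _ _ _ hd1 hd2 hd3 (hX _) (hY _) (hZ _)
        exact ⟨p, Subtype.ext (by rw [hp, hk])⟩
      | y k =>
        have hk : ρ (π.symm k) = k := π.apply_symm_apply k
        have hd1 : TVertBase.y (ρ (π.symm k)) ≠ TVertBase.x (ρ (π.symm k)) := by
          intro h; cases h
        have hd2 : TVertBase.y (ρ (π.symm k)) ≠ TVertBase.z (ρ (π.symm k)) := by
          intro h; cases h
        have hd3 : TVertBase.x (ρ (π.symm k)) ≠ TVertBase.z (ρ (π.symm k)) := by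
          intro h; cases h
        have hne1 : mkX (A := (1 : Matrix (Fin n) (Fin n) ℕ)) (π.symm k) ≠ mkY (π.symm k) := by
          intro h
          cases congrArg Subtype.val h
        have hne2 : mkX (A := (1 : Matrix (Fin n) (Fin n) ℕ)) (π.symm k) ≠ mkZ (π.symm k) := by
          intro h
          cases congrArg Subtype.val h
        have hne3 : mkY (A := (1 : Matrix (Fin n) (Fin n) ℕ)) (π.symm k) ≠ mkZ (π.symm k) := by
          intro h
          cases congrArg Subtype.val h
        obtain ⟨p, hp⟩ := pick3 (fun p => (f p).1) hinj' (mkX (π.symm k)) (mkY (π.symm k))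
          (mkZ (π.symm k)) hne1 hne2 hne3 _ _ _ hd1 hd2 hd3
          (by rcases hX (π.symm k) with h | h | h <;> tauto)
          (by rcases hY (π.symm k) with h | h | h <;> tauto)
          (by rcases hZ (π.symm k) with h | h | h <;> tauto)
        exact ⟨p, Subtype.ext (by rw [hp, hk])⟩
      | z k =>
        have hk : ρ (π.symm k) = k := π.apply_symm_apply k
        have hd1 : TVertBase.z (ρ (π.symm k)) ≠ TVertBase.x (ρ (π.symm k)) := by
          intro h; cases h
        have hd2 : TVertBase.z (ρ (π.symm k)) ≠ TVertBase.y (ρ (π.symm k)) := by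
          intro h; cases h
        have hd3 : TVertBase.x (ρ (π.symm k)) ≠ TVertBase.y (ρ (π.symm k)) := by
          intro h; cases h
        have hne1 : mkX (A := (1 : Matrix (Fin n) (Fin n) ℕ)) (π.symm k) ≠ mkY (π.symm k) := by
          intro h
          cases congrArg Subtype.val h
        have hne2 : mkX (A := (1 : Matrix (Fin n) (Fin n) ℕ)) (π.symm k) ≠ mkZ (π.symm k) := by
          intro h
          cases congrArg Subtype.val h
        have hne3 : mkY (A := (1 : Matrix (Fin n) (Fin n) ℕ)) (π.symm k) ≠ mkZ (π.symm k) := by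
          intro h
          cases congrArg Subtype.val h
        obtain ⟨p, hp⟩ := pick3 (fun p => (f p).1) hinj' (mkX (π.symm k)) (mkY (π.symm k))
          (mkZ (π.symm k)) hne1 hne2 hne3 _ _ _ hd1 hd2 hd3
          (by rcases hX (π.symm k) with h | h | h <;> tauto)
          (by rcases hY (π.symm k) with h | h | h <;> tauto)
          (by rcases hZ (π.symm k) with h | h | h <;> tauto)
        exact ⟨p, Subtype.ext (by rw [hp, hk])⟩
  -- edge sets agree
  have hedge_sub : S.edgeSet ⊆ (Sπ A π).edgeSet := by
    intro e he
    induction e using Sym2.ind with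
    | _ a b =>
      have hab : S.Adj a b := he
      refine ⟨S.adj_sub hab, ?_, ?_⟩
      · have := S.edge_vert hab
        rw [hverts] at this
        exact this
      · have := S.edge_vert hab.symm
        rw [hverts] at this
        exact this
  have hc1 := edgeSet_ncard_eq S φ
  have hc2 := edgeSet_ncard_eq (Sπ A π) (SπIso A π (fun i => hA1 i))
  have hedge : S.edgeSet = (Sπ A π).edgeSet :=
    Set.eq_of_subset_of_ncard_le hedge_sub (by rw [hc1, hc2])
  refine SimpleGraph.Subgraph.ext hverts ?_
  funext a b
  apply propext
  rw [← SimpleGraph.Subgraph.mem_edgeSet, ← SimpleGraph.Subgraph.mem_edgeSet, hedge]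

lemma Sπ_inj {A : Matrix (Fin n) (Fin n) ℕ} {π π' : Equiv.Perm (Fin n)}
    (hπ : ∀ i, A i (π i) = 1) (h : Sπ A π = Sπ A π') : π = π' := by
  apply Equiv.ext
  intro i
  have hmem : (mkB i (π i) (hπ i)) ∈ (Sπ A π).verts := by
    intro i' j' hb
    injection hb with h1 h2
    subst h1
    exact h2
  rw [h] at hmem
  exact (hmem i (π i) rfl).symm

end TreeCount

/-- **The permanent counts subtrees.** Let `n ≥ 5` and let `A` be an `n × n` matrix with
entries in `{0, 1}`. Then the permanent of `A` equals the number of subgraphs of `T_A`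
that are isomorphic to `T_{I_n}`, where `I_n` is the `n × n` identity matrix. -/
theorem permanent_eq_card_subtrees {n : ℕ} (hn : 5 ≤ n) (A : Matrix (Fin n) (Fin n) ℕ)
    (hA : ∀ i j : Fin n, A i j = 0 ∨ A i j = 1) :
    (∑ π : Equiv.Perm (Fin n), ∏ i : Fin n, A i (π i)) =
      Nat.card {S : (TGraph A).Subgraph //
        Nonempty (S.coe ≃g TGraph (1 : Matrix (Fin n) (Fin n) ℕ))} := by
  classical
  open TreeCount in
  have lhs : (∑ π : Equiv.Perm (Fin n), ∏ i : Fin n, A i (π i)) =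
      Nat.card {π : Equiv.Perm (Fin n) // ∀ i, A i (π i) = 1} := by
    rw [Nat.card_eq_fintype_card, Fintype.card_subtype]
    have hprod : ∀ π : Equiv.Perm (Fin n),
        (∏ i : Fin n, A i (π i)) = if (∀ i, A i (π i) = 1) then 1 else 0 := by
      intro π
      by_cases h : ∀ i, A i (π i) = 1
      · rw [if_pos h]
        exact Finset.prod_eq_one fun i _ => h i
      · rw [if_neg h]
        push_neg at h
        obtain ⟨i, hi⟩ := h
        have h0 : A i (π i) = 0 := by
          rcases hA i (π i) with h' | h'
          · exact h'
          · exact absurd h' hi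
        exact Finset.prod_eq_zero (Finset.mem_univ i) h0
    simp_rw [hprod]
    rw [Finset.card_filter]
  rw [lhs]
  apply Nat.card_eq_of_bijective
    (fun p : {π : Equiv.Perm (Fin n) // ∀ i, A i (π i) = 1} =>
      (⟨TreeCount.Sπ A p.1, ⟨TreeCount.SπIso A p.1 p.2⟩⟩ :
        {S : (TGraph A).Subgraph //
          Nonempty (S.coe ≃g TGraph (1 : Matrix (Fin n) (Fin n) ℕ))}))
  constructor
  · rintro ⟨π, hπ⟩ ⟨π', hπ'⟩ h
    have h2 : TreeCount.Sπ A π = TreeCount.Sπ A π' := congrArg Subtype.val h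
    exact Subtype.ext (TreeCount.Sπ_inj hπ h2)
  · rintro ⟨S, ⟨φ⟩⟩
    obtain ⟨π, hπ1, hπ2⟩ := TreeCount.exists_perm_of_iso hn S φ
    exact ⟨⟨π, hπ1⟩, Subtype.ext hπ2.symm⟩
end

section
/- Let k ≥ 1 and let F be a finite simple graph with exactly k edges and no isolated vertices. Then there exists a partition ρ of V(W_k) such that: {a} is a block of ρ; every block of ρ induces a connected subgraph of τLi(W_k); no block of ρ contains two vertices that are adjacent in W_k; and the graph obtained from the quotient graph W_k/ρ by deleting the vertex {a} (together with all incident edges) is isomorphic to F. -/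
/-- The vertices of the windmill graph `W_k`: a hub `a` and rim vertices
`v 1, …, v k, w 1, …, w k`. -/
inductive WVert (k : ℕ) : Type
  | a : WVert k
  | v : Fin k → WVert k
  | w : Fin k → WVert k
  deriving DecidableEq

/-- The (oriented) edges of the windmill graph `W_k`: `{a, v i}`, `{v i, w i}` and
`{w i, a}` for all `i ∈ [k]`. -/
inductive WAdjBase (k : ℕ) : WVert k → WVert k → Prop
  | av (i : Fin k) : WAdjBase k .a (.v i)
  | vw (i : Fin k) : WAdjBase k (.v i) (.w i)
  | wa (i : Fin k) : WAdjBase k (.w i) .a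

/-- The windmill graph `W_k`. -/
def WGraph (k : ℕ) : SimpleGraph (WVert k) where
  Adj s t := WAdjBase k s t ∨ WAdjBase k t s
  symm := ⟨fun _ _ h => Or.symm h⟩
  loopless := ⟨by rintro t (h | h) <;> cases h⟩

/-- **Every graph with `k` edges and no isolated vertices arises from the windmill
`W_k`.** Let `k ≥ 1` and let `F` be a finite simple graph with exactly `k` edges and no
isolated vertices. Then there exists a partition `ρ` of `V(W_k)` such that `{a}` is a
block of `ρ`, every block induces a connected subgraph of `τLi(W_k)`, no block contains
two vertices adjacent in `W_k`, and deleting the vertex `{a}` (with all incident edges)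
from the quotient graph `W_k/ρ` yields a graph isomorphic to `F`. -/
theorem windmill_minor_of_graph {VF : Type} [Fintype VF] (k : ℕ) (hk : 1 ≤ k)
    (F : SimpleGraph VF) (hedges : Nat.card F.edgeSet = k)
    (hnoiso : ∀ x : VF, ∃ y : VF, F.Adj x y) :
    ∃ ρ : Setoid (WVert k),
      ({x : WVert k | ρ.r x WVert.a} = {WVert.a}) ∧
      (∀ v : WVert k, ((tauLi (WGraph k)).induce {u : WVert k | ρ.r u v}).Connected) ∧
      (∀ u v : WVert k, ρ.r u v → ¬ (WGraph k).Adj u v) ∧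
      Nonempty
        (((quotientGraph (WGraph k) ρ).induce
            {B : Quotient ρ | B ≠ Quotient.mk ρ WVert.a}) ≃g F) := by
  classical
  -- enumerate the edges of `F`
  obtain ⟨e⟩ : Nonempty (Fin k ≃ F.edgeSet) := by
    have : Fintype F.edgeSet := inferInstance
    have hc : Fintype.card F.edgeSet = k := by
      rw [← Nat.card_eq_fintype_card, hedges]
    exact ⟨(Fintype.equivFinOfCardEq hc).symm⟩
  -- pick an ordered pair of endpoints for each edge
  have hrep : ∀ s : Sym2 VF, ∃ p : VF × VF, Sym2.mk p.1 p.2 = s := fun s =>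
    Sym2.ind (fun x y => ⟨(x, y), rfl⟩) s
  set fst : Fin k → VF := fun i => (Classical.choose (hrep (e i))).1 with hfst
  set snd : Fin k → VF := fun i => (Classical.choose (hrep (e i))).2 with hsnd
  have hmk : ∀ i : Fin k, s(fst i, snd i) = (e i : Sym2 VF) := fun i =>
    Classical.choose_spec (hrep (e i))
  have hadj : ∀ i : Fin k, F.Adj (fst i) (snd i) := fun i => by
    have := (e i).2
    rw [← hmk i] at this
    exact this
  -- the labelling map
  set g : WVert k → Option VF := fun u =>
    match u with
    | .a => none
    | .v i => some (fst i)
    | .w i => some (snd i) with hg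
  refine ⟨Setoid.ker g, ?_, ?_, ?_, ?_⟩
  · ext u
    cases u with
    | a => simp [Setoid.ker, Function.onFun, g]
    | v i => simp [Setoid.ker, Function.onFun, g]
    | w i => simp [Setoid.ker, Function.onFun, g]
  · -- connectivity of blocks
    intro v0
    have hadjW : ∀ u u' : WVert k, g u = g u' → u ≠ u' →
        (tauLi (WGraph k)).Adj u u' := by
      intro u u' hgu hne
      have ha : ∀ z : WVert k, z ≠ .a → (WGraph k).Adj z .a := by
        rintro (_ | i | i) hz
        · exact absurd rfl hz
        · exact Or.inr (WAdjBase.av i)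
        · exact Or.inl (WAdjBase.wa i)
      have hu : u ≠ .a := by
        rintro rfl
        cases u' with
        | a => exact hne rfl
        | v i => simp [g] at hgu
        | w i => simp [g] at hgu
      have hu' : u' ≠ .a := by
        rintro rfl
        cases u with
        | a => exact hne rfl
        | v i => simp [g] at hgu
        | w i => simp [g] at hgu
      exact ⟨hne, .a, ha u hu, ha u' hu'⟩
    haveI : Nonempty {u : WVert k | (Setoid.ker g).r u v0} := ⟨⟨v0, rfl⟩⟩
    refine ⟨fun x y => ?_⟩
    by_cases hxy : x = y
    · exact hxy ▸ SimpleGraph.Reachable.refl x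
    · refine SimpleGraph.Adj.reachable ?_
      have hx : g x.1 = g v0 := x.2
      have hy : g y.1 = g v0 := y.2
      have hne : x.1 ≠ y.1 := fun h => hxy (Subtype.ext h)
      exact hadjW x.1 y.1 (hx.trans hy.symm) hne
  · -- no block contains adjacent vertices
    rintro u v huv (h | h) <;> cases h <;> simp_all [Setoid.ker, Function.onFun, g]
    · exact (hadj ‹Fin k›).ne huv
    · exact (hadj ‹Fin k›).ne huv.symm
    all_goals simp_all
  · -- the isomorphism
    set ρ := Setoid.ker g with hρ
    have hker : ∀ u u' : WVert k, (Quotient.mk ρ u = Quotient.mk ρ u') ↔ g u = g u' := by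
      intro u u'
      exact ⟨Quotient.exact, fun h => Quotient.sound h⟩
    have hlift : ∀ u u' : WVert k, ρ.r u u' → g u = g u' := fun _ _ h => h
    set h : Quotient ρ → Option VF := Quotient.lift g hlift with hh
    have hB : ∀ (B : Quotient ρ), B ≠ Quotient.mk ρ .a → ∃ x : VF, h B = some x := by
      intro B hBne
      obtain ⟨u, rfl⟩ := Quotient.exists_rep B
      cases u with
      | a => exact absurd rfl hBne
      | v i => exact ⟨fst i, rfl⟩
      | w i => exact ⟨snd i, rfl⟩
    -- the underlying map
    set θ : {B : Quotient ρ // B ≠ Quotient.mk ρ .a} → VF :=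
      fun B => (h B.1).get (by
        obtain ⟨x, hx⟩ := hB B.1 B.2
        rw [hx]; rfl) with hθ
    have hθspec : ∀ B, h B.1 = some (θ B) := by
      intro B
      obtain ⟨x, hx⟩ := hB B.1 B.2
      simp [θ, hx]
    have hclass : ∀ (u : WVert k) (B : {B : Quotient ρ // B ≠ Quotient.mk ρ .a}),
        g u = some (θ B) → Quotient.mk ρ u = B.1 := by
      intro u B hu
      obtain ⟨u', hu'⟩ := Quotient.exists_rep B.1
      rw [← hu']
      refine (hker u u').mpr ?_
      have : h B.1 = g u' := by rw [← hu']; rfl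
      rw [hu, ← this, hθspec B]
    have hinj : Function.Injective θ := by
      intro B B' hBB'
      obtain ⟨u, hu⟩ := Quotient.exists_rep B.1
      have : g u = some (θ B') := by
        rw [← hBB', ← hθspec B, ← hu]; rfl
      exact Subtype.ext ((hu ▸ hclass u B' this : B.1 = B'.1))
    have hsurj : Function.Surjective θ := by
      intro x
      obtain ⟨y, hxy⟩ := hnoiso x
      set i := e.symm ⟨s(x, y), hxy⟩ with hi
      have hei : (e i : Sym2 VF) = s(x, y) := by rw [hi, Equiv.apply_symm_apply]
      have : s(fst i, snd i) = s(x, y) := by rw [hmk i, hei]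
      rw [Sym2.eq_iff] at this
      have hvne : (Quotient.mk ρ (WVert.v i) : Quotient ρ) ≠ Quotient.mk ρ .a :=
        fun hc => by simpa [g] using (hker _ _).mp hc
      have hwne : (Quotient.mk ρ (WVert.w i) : Quotient ρ) ≠ Quotient.mk ρ .a :=
        fun hc => by simpa [g] using (hker _ _).mp hc
      rcases this with ⟨h1, h2⟩ | ⟨h1, h2⟩
      · refine ⟨⟨Quotient.mk ρ (WVert.v i), hvne⟩, ?_⟩
        have := hθspec ⟨Quotient.mk ρ (WVert.v i), hvne⟩
        have h' : h (Quotient.mk ρ (WVert.v i)) = some (fst i) := rfl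
        rw [h'] at this
        rw [← h1]; exact (Option.some_injective _ this).symm
      · refine ⟨⟨Quotient.mk ρ (WVert.w i), hwne⟩, ?_⟩
        have := hθspec ⟨Quotient.mk ρ (WVert.w i), hwne⟩
        have h' : h (Quotient.mk ρ (WVert.w i)) = some (snd i) := rfl
        rw [h'] at this
        rw [← h2]; exact (Option.some_injective _ this).symm
    have hbij : Function.Bijective θ := ⟨hinj, hsurj⟩
    refine ⟨⟨Equiv.ofBijective θ hbij, ?_⟩⟩
    intro B B'
    simp only [Equiv.ofBijective_apply]
    constructor
    · -- F.Adj (θ B) (θ B') → induce Adj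
      intro hF
      obtain ⟨i, hi⟩ : ∃ i : Fin k,
          (fst i = θ B ∧ snd i = θ B') ∨ (fst i = θ B' ∧ snd i = θ B) := by
        set i := e.symm ⟨s(θ B, θ B'), hF⟩ with hi
        have hei : (e i : Sym2 VF) = s(θ B, θ B') := by rw [hi, Equiv.apply_symm_apply]
        have := (hmk i).trans hei
        rw [Sym2.eq_iff] at this
        exact ⟨i, this⟩
      have hBB' : B.1 ≠ B'.1 := by
        intro hh'
        exact hF.ne (congrArg θ (Subtype.ext hh'))
      rcases hi with ⟨h1, h2⟩ | ⟨h1, h2⟩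
      · refine ⟨hBB', WVert.v i, WVert.w i, ?_, ?_, Or.inl (WAdjBase.vw i)⟩
        · exact hclass _ B (by simp [g, h1])
        · exact hclass _ B' (by simp [g, h2])
      · refine ⟨hBB', WVert.w i, WVert.v i, ?_, ?_, Or.inr (WAdjBase.vw i)⟩
        · exact hclass _ B (by simp [g, h2])
        · exact hclass _ B' (by simp [g, h1])
    · -- induce Adj → F.Adj
      rintro ⟨hne, u, v, hu, hv, huv⟩
      have key : ∀ (i : Fin k) (C C' : {B : Quotient ρ // B ≠ Quotient.mk ρ .a}),
          Quotient.mk ρ (WVert.v i) = C.1 → Quotient.mk ρ (WVert.w i) = C'.1 →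
          F.Adj (θ C) (θ C') := by
        intro i C C' hC hC'
        have h1 : some (fst i) = some (θ C) := by
          rw [← hθspec C, ← hC]; rfl
        have h2 : some (snd i) = some (θ C') := by
          rw [← hθspec C', ← hC']; rfl
        rw [← Option.some_injective _ h1, ← Option.some_injective _ h2]
        exact hadj i
      rcases huv with h | h
      · cases h with
        | av i => exact absurd hu.symm B.2
        | vw i => exact key i B B' hu hv
        | wa i => exact absurd hv.symm B'.2
      · cases h with
        | av i => exact absurd hv.symm B'.2
        | vw i => exact (key i B' B hv hu).symm
        | wa i => exact absurd hu.symm B.2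
end

section
/- Let H and G be finite simple graphs, let R be a finite simple graph with vertex set V(H), and let σ ≤ ρ be R-connected partitions of V(H) (σ refines ρ) that are both H-loop-free. Then the number of homomorphisms φ from H/σ to G with the property that for every edge {u,v} of R one has φ([u]_σ) = φ([v]_σ) if and only if u and v lie in the same block of ρ, equals the cardinality of Hom(H/ρ, G)[R]. Here [x]_σ denotes the block of σ containing x. -/
/-- Auxiliary: if `φ` satisfies the iff condition relative to `ρ` and `ρ` is
`R`-connected, then `φ` is constant on `ρ`-blocks. -/
lemma const_on_block {V W : Type} (R : SimpleGraph V) {σ ρ : Setoid V}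
    (hρc : RConnectedPartition R ρ) (φ : Quotient σ → W)
    (hφ : ∀ u v : V, R.Adj u v → (φ (Quotient.mk σ u) = φ (Quotient.mk σ v) ↔ ρ.r u v))
    {u v : V} (h : ρ.r u v) : φ (Quotient.mk σ u) = φ (Quotient.mk σ v) := by
  have hu : u ∈ {x : V | ρ.r x v} := h
  have hv : v ∈ {x : V | ρ.r x v} := ρ.refl v
  obtain ⟨w⟩ := (hρc v) ⟨u, hu⟩ ⟨v, hv⟩
  suffices hS : ∀ (a b : {x : V // x ∈ {y : V | ρ.r y v}}),
      (R.induce {y : V | ρ.r y v}).Walk a b →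
      φ (Quotient.mk σ a.1) = φ (Quotient.mk σ b.1) from hS ⟨u, hu⟩ ⟨v, hv⟩ w
  intro a b w
  induction w with
  | nil => rfl
  | @cons x y z hxy p ih =>
    have hadj : R.Adj x.1 y.1 := hxy
    have hstep : φ (Quotient.mk σ x.1) = φ (Quotient.mk σ y.1) :=
      (hφ _ _ hadj).2 (ρ.trans x.2 (ρ.symm y.2))
    exact hstep.trans ih

/-- **The bijection between an equivalence class of homomorphisms and restricted
homomorphisms.** Let `σ ≤ ρ` be `R`-connected, `H`-loop-free partitions of `V(H)`.
Then the number of homomorphisms `φ : H/σ → G` such that, for every edge `{u,v}` of `R`,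
`φ([u]_σ) = φ([v]_σ)` holds if and only if `u` and `v` lie in the same block of `ρ`,
equals `#Hom(H/ρ, G)[R]`. -/
theorem card_class_eq_card_restrictedHom {V W : Type} [Fintype V] [Fintype W]
    (H : SimpleGraph V) (G : SimpleGraph W) (R : SimpleGraph V)
    (σ ρ : Setoid V) (hle : σ ≤ ρ)
    (hσc : RConnectedPartition R σ) (hρc : RConnectedPartition R ρ)
    (hσl : LoopFreePartition H σ) (hρl : LoopFreePartition H ρ) :
    Nat.card {φ : quotientGraph H σ →g G //
        ∀ u v : V, R.Adj u v →
          (φ (Quotient.mk σ u) = φ (Quotient.mk σ v) ↔ ρ.r u v)} =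
      Nat.card (RRestrictedHom H G R ρ) := by
  refine Nat.card_congr (Equiv.mk ?_ ?_ ?_ ?_)
  · -- forward map
    rintro ⟨φ, hφ⟩
    have hconst : ∀ {a b : V}, ρ.r a b →
        φ.toFun (Quotient.mk σ a) = φ.toFun (Quotient.mk σ b) := by
      intro a b h
      exact const_on_block R hρc φ.toFun (fun u v hR => hφ u v hR) h
    refine ⟨⟨Quotient.lift (fun v => φ.toFun (Quotient.mk σ v)) (fun a b h => hconst h), ?_⟩, ?_⟩
    · rintro B B' ⟨hne, u, v, rfl, rfl, huv⟩
      have hne' : Quotient.mk σ u ≠ Quotient.mk σ v := by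
        intro h
        exact hσl u v (Quotient.exact h) huv
      exact φ.map_rel' ⟨hne', u, v, rfl, rfl, huv⟩
    · intro u v hR hne h
      have : ρ.r u v := (hφ u v hR).1 h
      exact hne (Quotient.sound this)
  · -- inverse map
    rintro ⟨ψ, hψ⟩
    refine ⟨⟨Quotient.lift (fun v => ψ.toFun (Quotient.mk ρ v))
        (fun a b h => congrArg ψ.toFun (Quotient.sound (hle h))), ?_⟩, ?_⟩
    · rintro B B' ⟨hne, u, v, rfl, rfl, huv⟩
      have hne' : Quotient.mk ρ u ≠ Quotient.mk ρ v := by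
        intro h
        exact hρl u v (Quotient.exact h) huv
      exact ψ.map_rel' ⟨hne', u, v, rfl, rfl, huv⟩
    · intro u v hR
      constructor
      · intro h
        by_contra hr
        have hne : Quotient.mk ρ u ≠ Quotient.mk ρ v := fun he => hr (Quotient.exact he)
        exact hψ u v hR hne h
      · intro h
        exact congrArg ψ.toFun (Quotient.sound h)
  · rintro ⟨φ, hφ⟩
    apply Subtype.ext
    refine DFunLike.ext _ _ ?_
    intro B
    induction B using Quotient.ind
    rfl
  · rintro ⟨ψ, hψ⟩
    apply Subtype.ext
    refine DFunLike.ext _ _ ?_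
    intro B
    induction B using Quotient.ind
    rfl
end
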